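/- arXiv:1806.10020 — 5 statements merged into one kernel-verified Lean document; each statement's English description precedes it below -/
import Mathlib

section
/- For each i ∈ {1,…,l}, the operator B − r_i I is injective with non-dense range in c₀, and (B − r_i I)⁻¹ is bounded on the range; i.e., r_i belongs to the class III₁ of Goldberg's classification of the spectrum of B on c₀. -/
open Filter Topology
open Fin.NatCast

/-- For each `i`, `λ = r_i` lies in Goldberg's class `III₁` for `B` on `c₀`:
`B - r_i I` is injective, bounded below (so its inverse on the range is bounded), but its
range is not dense. -/
theorem stmt_10 (l l' : ℕ) [NeZero l] [NeZero l'] (r : Fin l → ℂ) (s : Fin l' → ℂ)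
    (hs : ∀ j, s j ≠ 0)
    (B : ZeroAtInftyContinuousMap ℕ ℂ →L[ℂ] ZeroAtInftyContinuousMap ℕ ℂ)
    (hB0 : ∀ x : ZeroAtInftyContinuousMap ℕ ℂ, B x 0 = r 0 * x 0)
    (hB : ∀ (x : ZeroAtInftyContinuousMap ℕ ℂ) (k : ℕ),
      B x (k + 1) = s (↑k) * x k + r (↑(k + 1)) * x (k + 1))
    (i : Fin l) :
    Function.Injective ⇑(B - r i • 1) ∧ ¬ DenseRange ⇑(B - r i • 1) ∧
      ∃ c > (0 : ℝ), ∀ x : ZeroAtInftyContinuousMap ℕ ℂ, c * ‖x‖ ≤ ‖(B - r i • 1) x‖ := by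
  haveI : Nonempty (Fin l) := ⟨i⟩
  haveI : Nonempty (Fin l') := ⟨⟨0, Nat.pos_of_ne_zero (NeZero.ne l')⟩⟩
  set A : ZeroAtInftyContinuousMap ℕ ℂ →L[ℂ] ZeroAtInftyContinuousMap ℕ ℂ := B - r i • 1 with hAdef
  have hApt : ∀ (x : ZeroAtInftyContinuousMap ℕ ℂ) (k : ℕ), (A x) k = B x k - r i * x k := by
    intro x k
    simp [hAdef, ZeroAtInftyContinuousMap.coe_sub, ZeroAtInftyContinuousMap.coe_smul,
      ContinuousLinearMap.sub_apply, ContinuousLinearMap.smul_apply, ContinuousLinearMap.one_apply]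
  have hA0 : ∀ (x : ZeroAtInftyContinuousMap ℕ ℂ), (A x) 0 = (r ((0:ℕ) : Fin l) - r i) * x 0 := by
    intro x
    rw [hApt, hB0]
    norm_num
    ring
  have hAk : ∀ (x : ZeroAtInftyContinuousMap ℕ ℂ) (k : ℕ),
      (A x) (k+1) = s (↑k) * x k + (r (↑(k+1)) - r i) * x (k+1) := by
    intro x k
    rw [hApt, hB]
    ring
  have hnle : ∀ (y : ZeroAtInftyContinuousMap ℕ ℂ) (k : ℕ), ‖y k‖ ≤ ‖y‖ := by
    intro y k
    rw [← ZeroAtInftyContinuousMap.norm_toBCF_eq_norm]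
    exact y.toBCF.norm_coe_le_norm k
  obtain ⟨j0, hj0⟩ := Finite.exists_min (fun j : Fin l' => ‖s j‖)
  obtain ⟨j1, hj1⟩ := Finite.exists_max (fun j : Fin l => ‖r j - r i‖)
  set S : ℝ := ‖s j0‖ with hSdef
  set M : ℝ := ‖r j1 - r i‖ with hMdef
  have hS : 0 < S := norm_pos_iff.mpr (hs j0)
  have hM : 0 ≤ M := norm_nonneg _
  set C : ℕ → ℝ := fun n => Nat.rec (1/S) (fun _ Cn => (1 + M * Cn)/S) n with hCdef
  have hC0 : C 0 = 1/S := rfl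
  have hCs : ∀ n, C (n+1) = (1 + M * C n)/S := fun n => rfl
  clear_value C
  have hCpos : ∀ n, 0 < C n := by
    intro n
    induction n with
    | zero => rw [hC0]; positivity
    | succ n ih =>
      rw [hCs]
      have h1 : 0 < 1 + M * C n := by positivity
      positivity
  have hCmono : Monotone C := by
    apply monotone_nat_of_le_succ
    intro n
    induction n with
    | zero =>
      rw [hC0, hCs, hC0]
      have h1 : (1:ℝ) ≤ 1 + M * (1/S) := by
        have : 0 ≤ M * (1/S) := by positivity
        linarith
      calc 1/S = 1/S * 1 := by ring
        _ ≤ 1/S * (1 + M * (1/S)) := by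
            apply mul_le_mul_of_nonneg_left h1 (by positivity)
        _ = (1 + M * (1/S))/S := by ring
    | succ n ih =>
      have h2 : M * C n ≤ M * C (n+1) := mul_le_mul_of_nonneg_left ih hM
      calc C (n+1) = (1 + M * C n)/S := hCs n
        _ ≤ (1 + M * C (n+1))/S := (div_le_div_iff_of_pos_right hS).mpr (by linarith)
        _ = C (n+1+1) := (hCs (n+1)).symm
  have hkey : ∀ (x : ZeroAtInftyContinuousMap ℕ ℂ) (n k : ℕ),
      ((k + n + 1 : ℕ) : Fin l) = i → ‖x k‖ ≤ C n * ‖A x‖ := by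
    intro x n
    induction n with
    | zero =>
      intro k hk
      simp only [Nat.add_zero] at hk
      have hd : r ((k+1 : ℕ) : Fin l) - r i = 0 := by rw [hk]; ring
      have heq : (A x) (k+1) = s (↑k) * x k := by rw [hAk, hd]; ring
      have h1 : S * ‖x k‖ ≤ ‖A x‖ := by
        calc S * ‖x k‖ ≤ ‖s ((↑k : Fin l'))‖ * ‖x k‖ :=
              mul_le_mul_of_nonneg_right (hj0 _) (norm_nonneg _)
          _ = ‖(A x) (k+1)‖ := by rw [heq, norm_mul]
          _ ≤ ‖A x‖ := hnle _ _
      rw [hC0, one_div, inv_mul_eq_div, le_div_iff₀ hS]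
      linarith [h1, mul_comm S ‖x k‖]
    | succ n ih =>
      intro k hk
      have hk' : (((k+1) + n + 1 : ℕ) : Fin l) = i := by
        rw [show (k+1) + n + 1 = k + (n+1) + 1 from by ring]; exact hk
      have ih' := ih (k+1) hk'
      have heq : s (↑k) * x k = (A x) (k+1) - (r (↑(k+1)) - r i) * x (k+1) := by
        rw [hAk]; ring
      have h1 : S * ‖x k‖ ≤ ‖A x‖ + M * (C n * ‖A x‖) := by
        calc S * ‖x k‖ ≤ ‖s ((↑k : Fin l'))‖ * ‖x k‖ :=
              mul_le_mul_of_nonneg_right (hj0 _) (norm_nonneg _)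
          _ = ‖s (↑k) * x k‖ := (norm_mul _ _).symm
          _ = ‖(A x) (k+1) - (r (↑(k+1)) - r i) * x (k+1)‖ := by rw [heq]
          _ ≤ ‖(A x) (k+1)‖ + ‖(r (↑(k+1)) - r i) * x (k+1)‖ := norm_sub_le _ _
          _ ≤ ‖A x‖ + M * (C n * ‖A x‖) := by
              rw [norm_mul]
              have h2 : ‖r ((↑(k+1) : ℕ) : Fin l) - r i‖ ≤ M := hj1 _
              have h3 : ‖x (k+1)‖ ≤ C n * ‖A x‖ := ih'
              have h4 : ‖(A x) (k+1)‖ ≤ ‖A x‖ := hnle _ _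
              have h5 : (0:ℝ) ≤ ‖x (k+1)‖ := norm_nonneg _
              have h6 : ‖r ((↑(k+1) : ℕ) : Fin l) - r i‖ * ‖x (k+1)‖ ≤ M * (C n * ‖A x‖) := by
                calc ‖r ((↑(k+1) : ℕ) : Fin l) - r i‖ * ‖x (k+1)‖ ≤ M * ‖x (k+1)‖ :=
                      mul_le_mul_of_nonneg_right h2 h5
                  _ ≤ M * (C n * ‖A x‖) := mul_le_mul_of_nonneg_left h3 hM
              linarith
      rw [hCs, div_mul_eq_mul_div, le_div_iff₀ hS]
      have hr : (1 + M * C n) * ‖A x‖ = ‖A x‖ + M * (C n * ‖A x‖) := by ring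
      linarith [h1, hr, mul_comm S ‖x k‖]
  -- uniform bound
  have hbound : ∀ x : ZeroAtInftyContinuousMap ℕ ℂ, ‖x‖ ≤ C (l-1) * ‖A x‖ := by
    intro x
    have h0 : (0:ℝ) ≤ C (l-1) * ‖A x‖ := mul_nonneg (hCpos _).le (norm_nonneg _)
    rw [← ZeroAtInftyContinuousMap.norm_toBCF_eq_norm]
    refine (BoundedContinuousFunction.norm_le h0).mpr ?_
    intro k
    set m : Fin l := i - ((k+1 : ℕ) : Fin l) with hmdef
    have hcast : ((k + m.val + 1 : ℕ) : Fin l) = i := by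
      push_cast
      rw [hmdef]
      push_cast
      abel
    have h1 := hkey x m.val k hcast
    have h2 : C m.val ≤ C (l-1) := hCmono (by omega)
    calc ‖x.toBCF k‖ ≤ C m.val * ‖A x‖ := h1
      _ ≤ C (l-1) * ‖A x‖ := mul_le_mul_of_nonneg_right h2 (norm_nonneg _)
  -- bounded below
  have hc : ∀ x : ZeroAtInftyContinuousMap ℕ ℂ, (C (l-1))⁻¹ * ‖x‖ ≤ ‖A x‖ := by
    intro x
    rw [inv_mul_le_iff₀ (hCpos _)]
    exact hbound x
  -- injectivity
  have hinj : Function.Injective ⇑A := by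
    intro x y hxy
    have h1 : A (x - y) = 0 := by rw [map_sub, hxy, sub_self]
    have h2 : ‖x - y‖ ≤ C (l-1) * ‖A (x - y)‖ := hbound _
    rw [h1, norm_zero, mul_zero] at h2
    have h3 : x - y = 0 := norm_le_zero_iff.mp h2
    exact sub_eq_zero.mp h3
  -- the annihilating functional
  set a : ℕ → ℂ := fun k => Nat.rec (1:ℂ) (fun n an => -(r (↑n) - r i) * an / s (↑n)) k with hadef
  have ha0 : a 0 = 1 := rfl
  have haS : ∀ n, a (n+1) = -(r (↑n) - r i) * a n / s (↑n) := fun n => rfl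
  clear_value a
  have hrel : ∀ n : ℕ, s (↑n) * a (n+1) = -(r (↑n) - r i) * a n := by
    intro n
    rw [haS n, mul_comm, div_mul_cancel₀ _ (hs _)]
  set φ : ZeroAtInftyContinuousMap ℕ ℂ →L[ℂ] ℂ := LinearMap.mkContinuous
    { toFun := fun x => ∑ k ∈ Finset.range (i.val+1), a k * x k
      map_add' := by
        intro x y
        simp only [ZeroAtInftyContinuousMap.coe_add, Pi.add_apply, mul_add,
          Finset.sum_add_distrib]
      map_smul' := by
        intro c x
        simp only [ZeroAtInftyContinuousMap.coe_smul, Pi.smul_apply, smul_eq_mul,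
          RingHom.id_apply, Finset.mul_sum]
        exact Finset.sum_congr rfl fun k _ => by ring }
    (∑ k ∈ Finset.range (i.val+1), ‖a k‖)
    (by
      intro x
      calc ‖∑ k ∈ Finset.range (i.val+1), a k * x k‖
          ≤ ∑ k ∈ Finset.range (i.val+1), ‖a k * x k‖ := norm_sum_le _ _
        _ ≤ ∑ k ∈ Finset.range (i.val+1), ‖a k‖ * ‖x‖ := by
            refine Finset.sum_le_sum fun k _ => ?_
            rw [norm_mul]
            exact mul_le_mul_of_nonneg_left (hnle x k) (norm_nonneg _)
        _ = (∑ k ∈ Finset.range (i.val+1), ‖a k‖) * ‖x‖ := (Finset.sum_mul _ _ _).symm)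
    with hphidef
  have hφapp : ∀ x : ZeroAtInftyContinuousMap ℕ ℂ,
      φ x = ∑ k ∈ Finset.range (i.val+1), a k * x k := fun x => rfl
  have hT : ∀ (x : ZeroAtInftyContinuousMap ℕ ℂ) (N : ℕ),
      ∑ k ∈ Finset.range (N+1), a k * (A x) k = a N * ((r (↑N) - r i) * x N) := by
    intro x N
    induction N with
    | zero =>
      rw [Finset.sum_range_one, hA0]
    | succ N ihN =>
      rw [Finset.sum_range_succ, ihN, hAk]
      linear_combination x N * hrel N
  have hφA : ∀ x : ZeroAtInftyContinuousMap ℕ ℂ, φ (A x) = 0 := by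
    intro x
    rw [hφapp, hT x i.val]
    have hzero : r ((i.val : ℕ) : Fin l) - r i = 0 := by rw [Fin.cast_val_eq_self]; ring
    rw [hzero, zero_mul, mul_zero]
  have he : ∃ e : ZeroAtInftyContinuousMap ℕ ℂ, φ e = 1 := by
    refine ⟨⟨⟨fun k => if k = 0 then 1 else 0, continuous_of_discreteTopology⟩, ?_⟩, ?_⟩
    · show Tendsto (fun k : ℕ => if k = 0 then (1:ℂ) else 0) (cocompact ℕ) (𝓝 0)
      rw [cocompact_eq_atTop]
      refine Tendsto.congr' ?_ tendsto_const_nhds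
      filter_upwards [eventually_ge_atTop 1] with k hk
      rw [if_neg (by omega)]
    · rw [hφapp]
      rw [Finset.sum_eq_single_of_mem 0 (Finset.mem_range.mpr (Nat.succ_pos _))
        (fun k _ hk => by
          show a k * (if k = 0 then (1:ℂ) else 0) = 0
          rw [if_neg hk, mul_zero])]
      show a 0 * (if (0:ℕ) = 0 then (1:ℂ) else 0) = 1
      rw [if_pos rfl, ha0, mul_one]
  have hnd : ¬ DenseRange ⇑A := by
    intro hd
    obtain ⟨e, he1⟩ := he
    have hcl : IsClosed {y : ZeroAtInftyContinuousMap ℕ ℂ | φ y = 0} :=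
      isClosed_eq φ.continuous continuous_const
    have hsub : Set.range ⇑A ⊆ {y | φ y = 0} := by rintro y ⟨x, rfl⟩; exact hφA x
    have hmem : e ∈ closure (Set.range ⇑A) := hd e
    have h0 : φ e = 0 := hcl.closure_subset_iff.mpr hsub hmem
    rw [he1] at h0
    exact one_ne_zero h0
  exact ⟨hinj, hnd, (C (l-1))⁻¹, inv_pos.mpr (hCpos _), hc⟩
end

section
/- For each i ∈ {1,…,l}, the adjoint operator (B − r_i I)* (acting on ℓ¹ via the transposed matrix) is surjective. -/
open Filter Topology Fin.NatCast

lemma fin_natCast_mod' (n L k : ℕ) [NeZero n] (h : n ∣ L) :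
    ((k % L : ℕ) : Fin n) = (k : Fin n) := by
  ext
  simp [Fin.val_natCast, Nat.mod_mod_of_dvd _ h]

/-- For each `i`, the adjoint `(B - r_i I)*`, acting on `ℓ¹` via the transposed
matrix `(Tx)_k = (r_{k mod l + 1} − r_i) x_k + s_{k mod l' + 1} x_{k+1}`, is surjective. -/
theorem stmt_11 (l l' : ℕ) [NeZero l] [NeZero l'] (r : Fin l → ℂ) (s : Fin l' → ℂ)
    (hs : ∀ j, s j ≠ 0) (i : Fin l) :
    ∀ y : ℕ → ℂ, Memℓp y 1 → ∃ x : ℕ → ℂ, Memℓp x 1 ∧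
      ∀ k : ℕ, (r (↑k) - r i) * x k + s (↑k) * x (k + 1) = y k := by
  intro y hy
  have hl : 0 < l := Nat.pos_of_ne_zero (NeZero.ne l)
  have hyS : Summable (fun k => ‖y k‖) := by
    have h1 : (0:ℝ) < (1 : ENNReal).toReal := by norm_num
    have := (memℓp_gen_iff h1).mp hy
    simpa using this
  set c : ℕ → ℂ := fun k => r ↑k - r i with hc
  let x : ℕ → ℂ := fun n => Nat.rec 0 (fun k xk => (y k - c k * xk) / s ↑k) n
  have hxs : ∀ k, x (k+1) = (y k - c k * x k) / s ↑k := fun k => rfl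
  refine ⟨x, ?_, ?_⟩
  · -- Memℓp x 1
    have hL : 0 < l * l' := Nat.mul_pos hl (Nat.pos_of_ne_zero (NeZero.ne l'))
    set L := l * l' with hLdef
    have hne : (Finset.range L).Nonempty := ⟨0, Finset.mem_range.mpr hL⟩
    set a : ℕ → ℝ := fun k => ‖c k / s ↑k‖ with hadef
    set b : ℕ → ℝ := fun k => ‖s (↑k : Fin l')‖⁻¹ with hbdef
    have ha_per : ∀ k, a k = a (k % L) := by
      intro k
      simp only [hadef, hc]
      rw [fin_natCast_mod' l L k ⟨l', rfl⟩, fin_natCast_mod' l' L k ⟨l, mul_comm l l'⟩]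
    have hb_per : ∀ k, b k = b (k % L) := by
      intro k
      simp only [hbdef]
      rw [fin_natCast_mod' l' L k ⟨l, mul_comm l l'⟩]
    set A := (Finset.range L).sup' hne a with hAdef
    set B := (Finset.range L).sup' hne b with hBdef
    have hA : ∀ k, a k ≤ A := fun k => by
      rw [ha_per k]
      exact Finset.le_sup' a (Finset.mem_range.mpr (Nat.mod_lt _ hL))
    have hB : ∀ k, b k ≤ B := fun k => by
      rw [hb_per k]
      exact Finset.le_sup' b (Finset.mem_range.mpr (Nat.mod_lt _ hL))
    have hB0 : 0 ≤ B := le_trans (inv_nonneg.mpr (norm_nonneg _)) (hB 0)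
    set M := max A 1 with hMdef
    have hM1 : (1:ℝ) ≤ M := le_max_right _ _
    have hM0 : (0:ℝ) ≤ M := le_trans zero_le_one hM1
    have hAM : ∀ k, a k ≤ M := fun k => le_trans (hA k) (le_max_left _ _)
    have hstep : ∀ k, ‖x (k+1)‖ ≤ B * ‖y k‖ + M * ‖x k‖ := by
      intro k
      rw [hxs]
      have h1 : (y k - c k * x k) / s ↑k = y k / s ↑k - (c k / s ↑k) * x k := by ring
      rw [h1]
      calc ‖y k / s ↑k - (c k / s ↑k) * x k‖
          ≤ ‖y k / s ↑k‖ + ‖(c k / s ↑k) * x k‖ := norm_sub_le _ _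
        _ = b k * ‖y k‖ + a k * ‖x k‖ := by
            rw [norm_div, norm_mul]; simp [hadef, hbdef]; ring
        _ ≤ B * ‖y k‖ + M * ‖x k‖ :=
            add_le_add (mul_le_mul_of_nonneg_right (hB k) (norm_nonneg _))
              (mul_le_mul_of_nonneg_right (hAM k) (norm_nonneg _))
    have key : ∀ t k₀, k₀ % l = i.val →
        ‖x (k₀ + 1 + t)‖ ≤ B * M ^ t * ∑ d ∈ Finset.range (t+1), ‖y (k₀ + t - d)‖ := by
      intro t
      induction t with
      | zero =>
        intro k₀ hk₀
        have hci : c k₀ = 0 := by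
          have hik : ((k₀ : ℕ) : Fin l) = i := by
            ext; simp [Fin.val_natCast, hk₀, Nat.mod_eq_of_lt i.isLt]
          simp [hc, hik]
        rw [hxs, hci]
        simp only [zero_mul, sub_zero, norm_div, pow_zero, mul_one]
        rw [Finset.sum_range_one]
        simp only [Nat.add_zero, Nat.sub_zero]
        calc ‖y k₀‖ / ‖s ↑k₀‖ = b k₀ * ‖y k₀‖ := by rw [hbdef]; ring
          _ ≤ B * ‖y k₀‖ := mul_le_mul_of_nonneg_right (hB k₀) (norm_nonneg _)
      | succ t ih =>
        intro k₀ hk₀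
        have h1 : k₀ + 1 + (t+1) = (k₀ + 1 + t) + 1 := by ring
        rw [h1]
        have hMt : (1:ℝ) ≤ M ^ (t+1) := one_le_pow₀ hM1
        have hsum_nonneg : (0:ℝ) ≤ ∑ d ∈ Finset.range (t+1), ‖y (k₀ + t - d)‖ :=
          Finset.sum_nonneg fun _ _ => norm_nonneg _
        calc ‖x ((k₀+1+t)+1)‖
            ≤ B * ‖y (k₀+1+t)‖ + M * ‖x (k₀+1+t)‖ := hstep _
          _ ≤ B * ‖y (k₀+1+t)‖ + M * (B * M ^ t * ∑ d ∈ Finset.range (t+1), ‖y (k₀ + t - d)‖) :=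
              add_le_add_right (mul_le_mul_of_nonneg_left (ih k₀ hk₀) hM0) _
          _ ≤ B * M ^ (t+1) * ‖y (k₀+1+t)‖
              + B * M ^ (t+1) * ∑ d ∈ Finset.range (t+1), ‖y (k₀ + t - d)‖ := by
              have h2 : B * ‖y (k₀+1+t)‖ ≤ B * M ^ (t+1) * ‖y (k₀+1+t)‖ := by
                nlinarith [mul_nonneg (sub_nonneg.mpr hMt)
                  (mul_nonneg hB0 (norm_nonneg (y (k₀+1+t))))]
              have h3 : M * (B * M ^ t * ∑ d ∈ Finset.range (t+1), ‖y (k₀ + t - d)‖)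
                  = B * M ^ (t+1) * ∑ d ∈ Finset.range (t+1), ‖y (k₀ + t - d)‖ := by ring
              linarith
          _ = B * M ^ (t+1) * ∑ d ∈ Finset.range (t+2), ‖y (k₀ + (t+1) - d)‖ := by
              rw [Finset.sum_range_succ' (fun d => ‖y (k₀ + (t+1) - d)‖) (t+1)]
              have e1 : ∀ d, k₀ + (t+1) - (d+1) = k₀ + t - d := fun d => by omega
              have e2 : k₀ + (t+1) - 0 = k₀ + 1 + t := by omega
              simp only [e1, e2]
              ring
    -- global constants
    set S := ∑' k, ‖y k‖ with hSdef
    set C := B * M ^ l with hCdef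
    have hC0 : 0 ≤ C := mul_nonneg hB0 (pow_nonneg hM0 _)
    set g : ℕ → ℕ → ℝ := fun d n => if d < n then ‖y (n - 1 - d)‖ else 0 with hgdef
    have hg_nonneg : ∀ d n, 0 ≤ g d n := by
      intro d n
      simp only [hgdef]
      split <;> [exact norm_nonneg _; exact le_refl 0]
    have hg_shift : ∀ d, (fun n => g d (n + (d+1))) = fun n => ‖y n‖ := by
      intro d
      funext n
      have h1 : d < n + (d+1) := by omega
      have h2 : n + (d+1) - 1 - d = n := by omega
      simp [hgdef, h1, h2]
    have hg_sum : ∀ d, Summable (g d) := by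
      intro d
      exact (summable_nat_add_iff (d+1)).mp ((hg_shift d) ▸ hyS)
    have hg_tsum : ∀ d, ∑' n, g d n = S := by
      intro d
      have h1 := Summable.sum_add_tsum_nat_add (d+1) (hg_sum d)
      have h2 : ∑ j ∈ Finset.range (d+1), g d j = 0 := by
        apply Finset.sum_eq_zero
        intro j hj
        have : ¬ d < j := by
          have := Finset.mem_range.mp hj; omega
        simp [hgdef, this]
      rw [h2, zero_add] at h1
      rw [← h1, hg_shift d, hSdef]
    have hxb : ∀ n, i.val + 1 ≤ n → ‖x n‖ ≤ C * ∑ d ∈ Finset.range l, g d n := by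
      intro n hn
      set q := n - 1 - i.val with hq
      set t := q % l with ht
      set k₀ := n - 1 - t with hk0
      have htl : t < l := Nat.mod_lt _ hl
      have htq : t ≤ q := Nat.mod_le _ _
      have hdm := Nat.div_add_mod q l
      have hk₀eq : k₀ = i.val + l * (q / l) := by omega
      have hk₀mod : k₀ % l = i.val := by
        rw [hk₀eq, Nat.add_mul_mod_self_left, Nat.mod_eq_of_lt i.isLt]
      have hneq : k₀ + 1 + t = n := by omega
      have hkt : k₀ + t = n - 1 := by omega
      have h1 := key t k₀ hk₀mod
      rw [hneq] at h1
      refine le_trans h1 ?_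
      have hsub : ∀ d ∈ Finset.range (t+1), ‖y (k₀ + t - d)‖ = g d n := by
        intro d hd
        have hd' : d ≤ t := by have := Finset.mem_range.mp hd; omega
        have hdn : d < n := by omega
        have : k₀ + t - d = n - 1 - d := by omega
        simp [hgdef, hdn, this]
      rw [Finset.sum_congr rfl hsub]
      have hss : ∑ d ∈ Finset.range (t+1), g d n ≤ ∑ d ∈ Finset.range l, g d n := by
        apply Finset.sum_le_sum_of_subset_of_nonneg
        · exact Finset.range_subset_range.mpr (by omega)
        · intro d _ _; exact hg_nonneg d n
      have hBM : B * M ^ t ≤ C := by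
        rw [hCdef]
        exact mul_le_mul_of_nonneg_left (pow_le_pow_right₀ hM1 (le_of_lt htl)) hB0
      calc B * M ^ t * ∑ d ∈ Finset.range (t+1), g d n
          ≤ C * ∑ d ∈ Finset.range (t+1), g d n :=
            mul_le_mul_of_nonneg_right hBM (Finset.sum_nonneg fun d _ => hg_nonneg d n)
        _ ≤ C * ∑ d ∈ Finset.range l, g d n := mul_le_mul_of_nonneg_left hss hC0
    set K := (∑ n ∈ Finset.range (i.val + 1), ‖x n‖) + C * (l * S) with hKdef
    have hS0 : 0 ≤ S := tsum_nonneg fun _ => norm_nonneg _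
    have hpart : ∀ N, ∑ n ∈ Finset.range N, ‖x n‖ ≤ K := by
      intro N
      have hClS : 0 ≤ C * (l * S) :=
        mul_nonneg hC0 (mul_nonneg (Nat.cast_nonneg l) hS0)
      rcases le_or_gt N (i.val + 1) with h | h
      · have h1 : ∑ n ∈ Finset.range N, ‖x n‖ ≤ ∑ n ∈ Finset.range (i.val+1), ‖x n‖ :=
          Finset.sum_le_sum_of_subset_of_nonneg (Finset.range_subset_range.mpr h)
            (fun _ _ _ => norm_nonneg _)
        linarith
      · have hsplit : ∑ n ∈ Finset.range N, ‖x n‖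
            = (∑ n ∈ Finset.range (i.val+1), ‖x n‖) + ∑ n ∈ Finset.Ico (i.val+1) N, ‖x n‖ := by
          rw [Finset.range_eq_Ico, ← Finset.sum_Ico_consecutive _ (Nat.zero_le (i.val+1)) (le_of_lt h),
            ← Finset.range_eq_Ico]
        rw [hsplit]
        have h2 : ∑ n ∈ Finset.Ico (i.val+1) N, ‖x n‖ ≤ C * (l * S) := by
          calc ∑ n ∈ Finset.Ico (i.val+1) N, ‖x n‖
              ≤ ∑ n ∈ Finset.Ico (i.val+1) N, C * ∑ d ∈ Finset.range l, g d n := by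
                apply Finset.sum_le_sum
                intro n hn
                exact hxb n (Finset.mem_Ico.mp hn).1
            _ = C * ∑ d ∈ Finset.range l, ∑ n ∈ Finset.Ico (i.val+1) N, g d n := by
                rw [← Finset.mul_sum, Finset.sum_comm]
            _ ≤ C * ∑ d ∈ Finset.range l, S := by
                apply mul_le_mul_of_nonneg_left _ hC0
                apply Finset.sum_le_sum
                intro d _
                calc ∑ n ∈ Finset.Ico (i.val+1) N, g d n
                    ≤ ∑' n, g d n :=
                      Summable.sum_le_tsum _ (fun n _ => hg_nonneg d n) (hg_sum d)
                  _ = S := hg_tsum d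
            _ = C * (l * S) := by
                rw [Finset.sum_const, Finset.card_range, nsmul_eq_mul]
        linarith
    have hxsum : Summable (fun n => ‖x n‖) :=
      summable_of_sum_range_le (fun n => norm_nonneg _) hpart
    apply memℓp_gen
    simpa using hxsum
  · intro k
    rw [hxs k]
    have hsk := hs ((k : ℕ) : Fin l')
    field_simp [hc]
    simp only [hc]; ring
end

section
/- For the special case l = l' = 1 (the generalized difference operator B(r,s) with s ≠ 0), the spectrum of B(r,s) on c₀ is the closed disc {λ ∈ ℂ : |λ − r| ≤ |s|}, the point spectrum is empty, the residual spectrum is the open disc {λ : |λ − r| < |s|}, and the continuous spectrum is the circle {λ : |λ − r| = |s|}. -/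
open Filter Topology

set_option maxHeartbeats 1000000
set_option synthInstance.maxHeartbeats 400000

noncomputable section

namespace Stmt14

local notation "E𝕔" => ZeroAtInftyContinuousMap ℕ ℂ

/-- The standard basis vector `e k` in `c₀`. -/
def ee (k : ℕ) : E𝕔 where
  toFun := fun j => if j = k then 1 else 0
  continuous_toFun := continuous_of_discreteTopology
  zero_at_infty' := by
    rw [cocompact_eq_atTop]
    refine tendsto_const_nhds.congr' ?_
    filter_upwards [eventually_gt_atTop k] with j hj
    simp [hj.ne']

@[simp] lemma ee_apply (k j : ℕ) : ee k j = if j = k then 1 else 0 := rfl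

/-- Evaluation at a point, as an additive monoid hom. -/
def evalAM (j : ℕ) : E𝕔 →+ ℂ :=
  AddMonoidHom.mk' (fun g => g j) (fun a b => by simp)

lemma sum_apply' (s : Finset ℕ) (g : ℕ → E𝕔) (j : ℕ) :
    (∑ k ∈ s, g k) j = ∑ k ∈ s, g k j :=
  map_sum (evalAM j) g s

lemma norm_le_iff {f : E𝕔} {C : ℝ} (hC : 0 ≤ C) : ‖f‖ ≤ C ↔ ∀ j, ‖f j‖ ≤ C := by
  rw [← ZeroAtInftyContinuousMap.norm_toBCF_eq_norm]
  exact BoundedContinuousFunction.norm_le hC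

lemma apply_le_norm (f : E𝕔) (j : ℕ) : ‖f j‖ ≤ ‖f‖ := by
  rw [← ZeroAtInftyContinuousMap.norm_toBCF_eq_norm]
  exact BoundedContinuousFunction.norm_coe_le_norm f.toBCF j

instance : Nontrivial E𝕔 := by
  refine ⟨ee 0, 0, fun h => ?_⟩
  have h0 : ee 0 0 = (0 : E𝕔) 0 := by rw [h]
  simp at h0

/-- Pointwise formula for weighted truncations. -/
lemma trunc_apply (N : ℕ) (c : ℕ → ℂ) (j : ℕ) :
    (∑ k ∈ Finset.range (N + 1), c k • ee k) j = if j < N + 1 then c j else 0 := by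
  rw [sum_apply']
  have h : ∀ k, (c k • ee k) j = if j = k then c k else 0 := fun k => by
    simp only [ZeroAtInftyContinuousMap.coe_smul, Pi.smul_apply, smul_eq_mul, ee_apply]
    split <;> simp
  simp only [h]
  rw [Finset.sum_ite_eq (Finset.range (N + 1)) j c]
  simp [Finset.mem_range]

/-- Truncations of `y` converge to `y` in `c₀`. -/
lemma trunc_tendsto (y : E𝕔) :
    Tendsto (fun N => ∑ k ∈ Finset.range (N + 1), y k • ee k) atTop (𝓝 y) := by
  rw [NormedAddCommGroup.tendsto_atTop]
  intro ε hε
  have hy := y.zero_at_infty'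
  rw [cocompact_eq_atTop, Metric.tendsto_nhds] at hy
  obtain ⟨M, hM⟩ := (eventually_atTop).1 (hy (ε / 2) (half_pos hε))
  refine ⟨M, fun n hn => ?_⟩
  have hle : ‖(∑ k ∈ Finset.range (n + 1), y k • ee k) - y‖ ≤ ε / 2 := by
    rw [norm_le_iff (le_of_lt (half_pos hε))]
    intro j
    have hj : ((∑ k ∈ Finset.range (n + 1), y k • ee k) - y) j
        = (if j < n + 1 then y j else 0) - y j := by
      simp only [ZeroAtInftyContinuousMap.coe_sub, Pi.sub_apply]
      rw [trunc_apply]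
    rw [hj]
    by_cases h : j < n + 1
    · simp [h, le_of_lt (half_pos hε)]
    · simp only [h, if_neg, ite_false, zero_sub, norm_neg]
      push_neg at h
      have := hM j (le_trans hn (le_trans (Nat.le_succ n) h))
      rw [dist_zero_right] at this
      exact le_of_lt this
  calc ‖(∑ k ∈ Finset.range (n + 1), y k • ee k) - y‖ ≤ ε / 2 := hle
    _ < ε := half_lt_self hε

/-- If a continuous linear map does not have dense range, there is a nonzero continuous
functional vanishing on its range (Hahn–Banach). -/
lemma exists_functional {F : Type*} [NormedAddCommGroup F] [NormedSpace ℂ F] (T : F →L[ℂ] F)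
    (h : ¬ DenseRange ⇑T) : ∃ f : F →L[ℂ] ℂ, f ≠ 0 ∧ ∀ x, f (T x) = 0 := by
  classical
  have hrange : (LinearMap.range (T : F →ₗ[ℂ] F) : Set F) = Set.range ⇑T := by
    ext y; simp [LinearMap.mem_range]
  obtain ⟨x₀, hx₀⟩ : ∃ x₀, x₀ ∉ closure (LinearMap.range (T : F →ₗ[ℂ] F) : Set F) := by
    by_contra hco
    push_neg at hco
    exact h (by rwa [DenseRange, ← hrange])
  have hconv : Convex ℝ (closure (LinearMap.range (T : F →ₗ[ℂ] F) : Set F)) := by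
    refine Convex.closure ?_
    have := ((LinearMap.range (T : F →ₗ[ℂ] F)).restrictScalars ℝ).convex
    simpa using this
  obtain ⟨g, u, hgx, hub⟩ :=
    geometric_hahn_banach_point_closed hconv isClosed_closure hx₀
  have hu0 : u < 0 := by
    have h0 := hub 0 (subset_closure (LinearMap.range (T : F →ₗ[ℂ] F)).zero_mem)
    simpa using h0
  have hvanish : ∀ y ∈ LinearMap.range (T : F →ₗ[ℂ] F), g y = 0 := by
    intro y hy
    by_contra hne
    have hmem : ((u - 1) / g y) • y ∈ LinearMap.range (T : F →ₗ[ℂ] F) :=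
      ((LinearMap.range (T : F →ₗ[ℂ] F)).restrictScalars ℝ).smul_mem _ hy
    have h2 := hub _ (subset_closure hmem)
    rw [map_smul, smul_eq_mul, div_mul_cancel₀ _ hne] at h2
    linarith
  refine ⟨g.extendRCLike, fun hzero => ?_, fun x => ?_⟩
  · have hre : Complex.re (g.extendRCLike x₀) = g x₀ := by
      rw [g.extendRCLike_apply]
      simp
    rw [hzero] at hre
    simp only [ContinuousLinearMap.zero_apply, Complex.zero_re] at hre
    have : g x₀ < 0 := lt_trans hgx hu0
    rw [← hre] at this
    exact lt_irrefl _ this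
  · rw [g.extendRCLike_apply]
    rw [hvanish (T x) (LinearMap.mem_range_self (T : F →ₗ[ℂ] F) x),
      hvanish ((RCLike.I : ℂ) • T x)
        ((LinearMap.range (T : F →ₗ[ℂ] F)).smul_mem _ (LinearMap.mem_range_self (T : F →ₗ[ℂ] F) x))]
    simp

section Functional

variable {t : ℂ}

lemma hsum (ht : ‖t‖ < 1) (y : E𝕔) : Summable (fun k => t ^ k * y k) := by
  refine Summable.of_norm_bounded (g := fun k => ‖y‖ * ‖t‖ ^ k)
    ((summable_geometric_of_lt_one (norm_nonneg t) ht).mul_left _) fun k => ?_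
  rw [norm_mul, norm_pow]
  calc ‖t‖ ^ k * ‖y k‖ ≤ ‖t‖ ^ k * ‖y‖ :=
        mul_le_mul_of_nonneg_left (apply_le_norm y k) (by positivity)
    _ = ‖y‖ * ‖t‖ ^ k := by ring

lemma term_bound (y : E𝕔) (k : ℕ) : ‖t ^ k * y k‖ ≤ ‖y‖ * ‖t‖ ^ k := by
  rw [norm_mul, norm_pow]
  calc ‖t‖ ^ k * ‖y k‖ ≤ ‖t‖ ^ k * ‖y‖ :=
        mul_le_mul_of_nonneg_left (apply_le_norm y k) (by positivity)
    _ = ‖y‖ * ‖t‖ ^ k := by ring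

/-- The functional `y ↦ ∑ t^k y k` on `c₀`. -/
def Ffun (ht : ‖t‖ < 1) : E𝕔 →L[ℂ] ℂ :=
  LinearMap.mkContinuous
    { toFun := fun y => ∑' k, t ^ k * y k
      map_add' := fun a b => by
        have h : ∀ k, t ^ k * (a + b) k = t ^ k * a k + t ^ k * b k := fun k => by
          simp only [ZeroAtInftyContinuousMap.coe_add, Pi.add_apply]; ring
        calc (∑' k, t ^ k * (a + b) k) = ∑' k, (t ^ k * a k + t ^ k * b k) := tsum_congr h
          _ = _ := Summable.tsum_add (hsum ht a) (hsum ht b)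
      map_smul' := fun c y => by
        have h : ∀ k, t ^ k * (c • y) k = c * (t ^ k * y k) := fun k => by
          simp only [ZeroAtInftyContinuousMap.coe_smul, Pi.smul_apply, smul_eq_mul]; ring
        calc (∑' k, t ^ k * (c • y) k) = ∑' k, c * (t ^ k * y k) := tsum_congr h
          _ = c * ∑' k, t ^ k * y k := tsum_mul_left
          _ = _ := rfl }
    (1 - ‖t‖)⁻¹
    (by
      intro y
      have hb : HasSum (fun k => ‖y‖ * ‖t‖ ^ k) (‖y‖ * (1 - ‖t‖)⁻¹) :=
        (hasSum_geometric_of_lt_one (norm_nonneg t) ht).mul_left _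
      have h2 := tsum_of_norm_bounded hb (term_bound y)
      calc ‖∑' k, t ^ k * y k‖ ≤ ‖y‖ * (1 - ‖t‖)⁻¹ := h2
        _ = (1 - ‖t‖)⁻¹ * ‖y‖ := by ring)

lemma Ffun_apply (ht : ‖t‖ < 1) (y : E𝕔) : Ffun ht y = ∑' k, t ^ k * y k := rfl

lemma Ffun_ee0 (ht : ‖t‖ < 1) : Ffun ht (ee 0) = 1 := by
  rw [Ffun_apply]
  rw [tsum_eq_single 0 (fun k hk => by simp [hk])]
  simp

end Functional

variable (r s : ℂ) (B : E𝕔 →L[ℂ] E𝕔)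

lemma T0 (hB0 : ∀ x : E𝕔, B x 0 = r * x 0) (lam : ℂ) (x : E𝕔) :
    (B - lam • 1) x 0 = (r - lam) * x 0 := by
  simp only [ContinuousLinearMap.sub_apply, ContinuousLinearMap.smul_apply,
    ContinuousLinearMap.one_apply, ZeroAtInftyContinuousMap.coe_sub, Pi.sub_apply,
    ZeroAtInftyContinuousMap.coe_smul, Pi.smul_apply, smul_eq_mul, hB0 x]
  ring

lemma Tk (hB : ∀ (x : E𝕔) (k : ℕ), B x (k + 1) = s * x k + r * x (k + 1))
    (lam : ℂ) (x : E𝕔) (k : ℕ) :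
    (B - lam • 1) x (k + 1) = s * x k + (r - lam) * x (k + 1) := by
  simp only [ContinuousLinearMap.sub_apply, ContinuousLinearMap.smul_apply,
    ContinuousLinearMap.one_apply, ZeroAtInftyContinuousMap.coe_sub, Pi.sub_apply,
    ZeroAtInftyContinuousMap.coe_smul, Pi.smul_apply, smul_eq_mul, hB x]
  ring

lemma inj (hs : s ≠ 0) (hB0 : ∀ x : E𝕔, B x 0 = r * x 0)
    (hB : ∀ (x : E𝕔) (k : ℕ), B x (k + 1) = s * x k + r * x (k + 1)) (lam : ℂ) :
    Function.Injective ⇑(B - lam • 1) := by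
  have key : ∀ x : E𝕔, (B - lam • 1) x = 0 → x = 0 := by
    intro x hx
    have hxj : ∀ j, (B - lam • 1) x j = 0 := fun j => by rw [hx]; simp
    ext j
    simp only [ZeroAtInftyContinuousMap.coe_zero, Pi.zero_apply]
    by_cases hlr : lam = r
    · have h := hxj (j + 1)
      rw [Tk r s B hB lam x j, hlr, sub_self, zero_mul, add_zero] at h
      exact (mul_eq_zero.1 h).resolve_left hs
    · induction j with
      | zero =>
        have h := hxj 0
        rw [T0 r B hB0 lam x] at h
        exact (mul_eq_zero.1 h).resolve_left (sub_ne_zero.2 fun hrl => hlr hrl.symm)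
      | succ k ih =>
        have h := hxj (k + 1)
        rw [Tk r s B hB lam x k, ih, mul_zero, zero_add] at h
        exact (mul_eq_zero.1 h).resolve_left (sub_ne_zero.2 fun hrl => hlr hrl.symm)
  intro a b hab
  have : (B - lam • 1) (a - b) = 0 := by rw [map_sub, hab, sub_self]
  exact sub_eq_zero.1 (key _ this)

lemma spec_subset (hB0 : ∀ x : E𝕔, B x 0 = r * x 0)
    (hB : ∀ (x : E𝕔) (k : ℕ), B x (k + 1) = s * x k + r * x (k + 1))
    {lam : ℂ} (hlam : lam ∈ spectrum ℂ B) : ‖lam - r‖ ≤ ‖s‖ := by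
  have hDnorm : ‖B - r • 1‖ ≤ ‖s‖ := by
    refine ContinuousLinearMap.opNorm_le_bound _ (norm_nonneg s) fun x => ?_
    rw [norm_le_iff (mul_nonneg (norm_nonneg s) (norm_nonneg x))]
    intro j
    match j with
    | 0 =>
      have h : (B - r • 1) x 0 = (r - r) * x 0 := T0 r B hB0 r x
      rw [h, sub_self, zero_mul, norm_zero]
      exact mul_nonneg (norm_nonneg s) (norm_nonneg x)
    | Nat.succ k =>
      have h : (B - r • 1) x (k + 1) = s * x k + (r - r) * x (k + 1) := Tk r s B hB r x k
      rw [h, sub_self, zero_mul, add_zero, norm_mul]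
      exact mul_le_mul_of_nonneg_left (apply_le_norm x k) (norm_nonneg s)
  have hmem : lam - r ∈ spectrum ℂ (B - r • 1) := by
    rw [spectrum.mem_iff] at hlam ⊢
    have h : (@algebraMap ℂ (E𝕔 →L[ℂ] E𝕔) _ _ ContinuousLinearMap.algebra) (lam - r) - (B - r • 1)
        = (@algebraMap ℂ (E𝕔 →L[ℂ] E𝕔) _ _ ContinuousLinearMap.algebra) lam - B := by
      rw [Algebra.algebraMap_eq_smul_one, Algebra.algebraMap_eq_smul_one]; module
    rwa [h]
  have h2 : ‖lam - r‖ ≤ ‖B - r • 1‖ :=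
    spectrum.norm_le_norm_of_mem (𝕜 := ℂ) (A := E𝕔 →L[ℂ] E𝕔) hmem
  exact h2.trans hDnorm

lemma surj_of_unit (lam : ℂ) (hU : IsUnit ((@algebraMap ℂ (E𝕔 →L[ℂ] E𝕔) _ _ ContinuousLinearMap.algebra) lam - B)) :
    Function.Surjective ⇑(B - lam • 1) := by
  have hE : (@algebraMap ℂ (E𝕔 →L[ℂ] E𝕔) _ _ ContinuousLinearMap.algebra) lam - B = -(B - lam • 1) := by
    rw [Algebra.algebraMap_eq_smul_one]; module
  rw [hE] at hU
  have hbij := ContinuousLinearMap.isUnit_iff_bijective.1 hU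
  intro y
  obtain ⟨x, hx⟩ := hbij.2 (-y)
  refine ⟨x, ?_⟩
  have h2 : (-(B - lam • 1)) x = -((B - lam • 1) x) := by simp
  rw [h2] at hx
  exact neg_injective hx

lemma inSpec_of_notDense (lam : ℂ) (h : ¬ DenseRange ⇑(B - lam • 1)) :
    lam ∈ spectrum ℂ B := by
  rw [spectrum.mem_iff]
  intro hU
  exact h (surj_of_unit B lam hU).denseRange

lemma notDense (hs : s ≠ 0) (hB0 : ∀ x : E𝕔, B x 0 = r * x 0)
    (hB : ∀ (x : E𝕔) (k : ℕ), B x (k + 1) = s * x k + r * x (k + 1))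
    {lam : ℂ} (hlt : ‖lam - r‖ < ‖s‖) :
    ¬ DenseRange ⇑(B - lam • 1) := by
  have hspos : 0 < ‖s‖ := norm_pos_iff.mpr hs
  set t : ℂ := (lam - r) / s with htdef
  have ht : ‖t‖ < 1 := by
    rw [htdef, norm_div]
    exact (div_lt_one hspos).2 hlt
  have hst : s * t = lam - r := mul_div_cancel₀ _ hs
  set f := Ffun ht with hf
  have hker : ∀ x : E𝕔, f ((B - lam • 1) x) = 0 := by
    intro x
    set u : ℕ → ℂ := fun k => t ^ k * x k with hu
    obtain ⟨S, hS⟩ := hsum ht x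
    set g : ℕ → ℂ := fun k => Nat.rec 0 (fun n _ => s * t * u n) k with hg
    have hg0 : g 0 = 0 := rfl
    have hgs : ∀ n, g (n + 1) = s * t * u n := fun n => rfl
    have h2 : HasSum (fun k : ℕ => s * t * u k) (s * t * S) := hS.mul_left _
    have h3 : HasSum g (s * t * S) := by
      refine (Function.Injective.hasSum_iff Nat.succ_injective ?_).1 ?_
      · rintro (_ | n) hn
        · rfl
        · exact absurd ⟨n, rfl⟩ hn
      · exact h2
    have h1 : HasSum (fun k => (r - lam) * u k) ((r - lam) * S) := hS.mul_left _
    have h4 : HasSum (fun k => g k + (r - lam) * u k) (s * t * S + (r - lam) * S) := h3.add h1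
    have heq : (fun k => t ^ k * ((B - lam • 1) x) k) = fun k => g k + (r - lam) * u k := by
      funext k
      match k with
      | 0 =>
        rw [T0 r B hB0 lam x, hg0, hu]
        simp only [pow_zero, one_mul, zero_add]
      | Nat.succ n =>
        rw [Tk r s B hB lam x n, hgs, hu]
        simp only [pow_succ]
        ring
    have h5 : HasSum (fun k => t ^ k * ((B - lam • 1) x) k) 0 := by
      rw [heq]
      convert h4 using 1
      rw [hst]
      ring
    rw [hf, Ffun_apply]
    exact h5.tsum_eq
  intro hdr
  have hzero : ⇑f = ⇑(0 : E𝕔 →L[ℂ] ℂ) := by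
    refine hdr.equalizer f.continuous continuous_const (funext fun x => ?_)
    simpa using hker x
  have h1 : f (ee 0) = 0 := by rw [hzero]; rfl
  rw [Ffun_ee0] at h1
  exact one_ne_zero h1

lemma dense_circle (hs : s ≠ 0) (hB0 : ∀ x : E𝕔, B x 0 = r * x 0)
    (hB : ∀ (x : E𝕔) (k : ℕ), B x (k + 1) = s * x k + r * x (k + 1))
    {lam : ℂ} (hcirc : ‖lam - r‖ = ‖s‖) :
    DenseRange ⇑(B - lam • 1) := by
  classical
  by_contra h
  obtain ⟨f, hf0, hker⟩ := exists_functional (B - lam • 1) h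
  set α : ℕ → ℂ := fun k => f (ee k) with hα
  have hTee : ∀ k, (B - lam • 1) (ee k) = s • ee (k + 1) + (r - lam) • ee k := by
    intro k
    ext j
    have hrhs : (s • ee (k + 1) + (r - lam) • ee k) j
        = s * (if j = k + 1 then 1 else 0) + (r - lam) * (if j = k then 1 else 0) := by
      simp [ZeroAtInftyContinuousMap.coe_add, ZeroAtInftyContinuousMap.coe_smul]
    rw [hrhs]
    match j with
    | 0 =>
      rw [T0 r B hB0 lam (ee k)]
      simp
    | Nat.succ n =>
      rw [Tk r s B hB lam (ee k) n]
      simp [Nat.succ_inj]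
  have hrec : ∀ k, α (k + 1) = ((lam - r) / s) * α k := by
    intro k
    have h0 := hker (ee k)
    rw [hTee k, map_add, map_smul, map_smul, smul_eq_mul, smul_eq_mul] at h0
    rw [div_mul_eq_mul_div, eq_div_iff hs]
    linear_combination h0
  have habs : ∀ k, ‖α k‖ = ‖α 0‖ := by
    intro k
    induction k with
    | zero => rfl
    | succ n ih =>
      rw [hrec n, norm_mul, norm_div, hcirc, div_self (norm_ne_zero_iff.mpr hs), one_mul, ih]
  have hbound : ∀ N : ℕ, (N + 1 : ℝ) * ‖α 0‖ ≤ ‖f‖ := by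
    intro N
    set σ : ℕ → ℂ :=
      fun k => if α k = 0 then 1 else (starRingEnd ℂ) (α k) / (‖α k‖ : ℂ) with hσ
    have hσnorm : ∀ k, ‖σ k‖ = 1 := by
      intro k
      by_cases h' : α k = 0
      · simp [hσ, h']
      · simp only [hσ, h', if_neg, ite_false, norm_div, Complex.norm_conj, Complex.norm_real, norm_norm,
          abs_of_nonneg (norm_nonneg (α k))]
        exact div_self (norm_ne_zero_iff.mpr h')
    have hσα : ∀ k, σ k * α k = (‖α k‖ : ℂ) := by
      intro k
      by_cases h' : α k = 0
      · simp [hσ, h']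
      · rw [hσ]
        simp only [h', if_neg, ite_false]
        rw [div_mul_eq_mul_div, mul_comm ((starRingEnd ℂ) (α k)) (α k), Complex.mul_conj,
          ← Complex.sq_norm]
        push_cast
        rw [sq, mul_div_assoc, div_self, mul_one]
        exact_mod_cast norm_ne_zero_iff.mpr h'
    set x : E𝕔 := ∑ k ∈ Finset.range (N + 1), σ k • ee k with hx
    have hxnorm : ‖x‖ ≤ 1 := by
      rw [norm_le_iff zero_le_one]
      intro j
      rw [hx, trunc_apply]
      by_cases h' : j < N + 1
      · simp only [h', if_pos, ite_true, hσnorm j, le_refl]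
      · simp [h']
    have hfx : f x = ((N + 1 : ℝ) * ‖α 0‖ : ℝ) := by
      rw [hx, map_sum]
      have hterm : ∀ k, f (σ k • ee k) = (‖α 0‖ : ℂ) := by
        intro k
        rw [map_smul, smul_eq_mul, show f (ee k) = α k from rfl, hσα k, habs k]
      rw [Finset.sum_congr rfl (fun k _ => hterm k)]
      rw [Finset.sum_const, Finset.card_range, nsmul_eq_mul]
      push_cast
      ring
    have h1 : ‖f x‖ ≤ ‖f‖ := by
      calc ‖f x‖ = ‖f x‖ := rfl
        _ ≤ ‖f‖ * ‖x‖ := f.le_opNorm x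
        _ ≤ ‖f‖ * 1 := mul_le_mul_of_nonneg_left hxnorm (norm_nonneg f)
        _ = ‖f‖ := mul_one _
    rw [hfx, Complex.norm_real, Real.norm_eq_abs, abs_of_nonneg
      (mul_nonneg (by positivity) (norm_nonneg _))] at h1
    exact h1
  have hα0 : α 0 = 0 := by
    by_contra hne
    have hpos : 0 < ‖α 0‖ := norm_pos_iff.mpr hne
    obtain ⟨N, hN⟩ := exists_nat_gt (‖f‖ / ‖α 0‖)
    have h2 := hbound N
    have h3 : (N + 1 : ℝ) ≤ ‖f‖ / ‖α 0‖ := by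
      rw [le_div_iff₀ hpos]
      exact h2
    have : (N : ℝ) < N + 1 := by linarith
    linarith
  have hαk : ∀ k, α k = 0 := by
    intro k
    have := habs k
    rw [hα0, norm_zero] at this
    exact norm_eq_zero.1 this
  apply hf0
  ext y
  simp only [ContinuousLinearMap.zero_apply]
  have htr : ∀ N, f (∑ k ∈ Finset.range (N + 1), y k • ee k) = 0 := by
    intro N
    rw [map_sum]
    refine Finset.sum_eq_zero fun k _ => ?_
    rw [map_smul, smul_eq_mul, show f (ee k) = α k from rfl, hαk k, mul_zero]
  have hcv := (f.continuous.tendsto y).comp (trunc_tendsto y)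
  have hconst : (⇑f ∘ fun N => ∑ k ∈ Finset.range (N + 1), y k • ee k) = fun _ => (0 : ℂ) :=
    funext fun N => htr N
  rw [hconst] at hcv
  exact (tendsto_nhds_unique tendsto_const_nhds hcv).symm

lemma not_bdd (lam : ℂ) (hspec : lam ∈ spectrum ℂ B)
    (hinj : Function.Injective ⇑(B - lam • 1))
    (hdense : DenseRange ⇑(B - lam • 1)) :
    ¬ ∃ c > (0 : ℝ), ∀ x : E𝕔, c * ‖x‖ ≤ ‖(B - lam • 1) x‖ := by
  rintro ⟨c, hc, hb⟩
  set T := B - lam • 1 with hT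
  have hanti : AntilipschitzWith (⟨c⁻¹, by positivity⟩ : NNReal) ⇑T := by
    refine T.antilipschitz_of_bound fun x => ?_
    show ‖x‖ ≤ c⁻¹ * ‖T x‖
    exact (le_inv_mul_iff₀ hc).2 (hb x)
  have hclosed : IsClosed (Set.range ⇑T) := hanti.isClosed_range T.uniformContinuous
  have hsurj : Function.Surjective ⇑T := by
    have h2 : Set.range ⇑T = Set.univ := by
      rw [← hclosed.closure_eq]
      exact hdense.closure_range
    exact Set.range_eq_univ.1 h2
  have hUnit : IsUnit T := ContinuousLinearMap.isUnit_iff_bijective.2 ⟨hinj, hsurj⟩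
  have hE : (@algebraMap ℂ (E𝕔 →L[ℂ] E𝕔) _ _ ContinuousLinearMap.algebra) lam - B = -T := by
    rw [hT, Algebra.algebraMap_eq_smul_one]; module
  have hbijn : Function.Bijective ⇑(-T) := by
    have hcoe : ⇑(-T) = fun x => -(T x) := by ext x; simp
    rw [hcoe]
    refine ⟨fun a b hab => hinj (neg_injective hab), fun y => ?_⟩
    obtain ⟨x, hx⟩ := hsurj (-y)
    exact ⟨x, by show -(T x) = y; rw [hx, neg_neg]⟩
  have : IsUnit ((@algebraMap ℂ (E𝕔 →L[ℂ] E𝕔) _ _ ContinuousLinearMap.algebra) lam - B) := by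
    rw [hE]; exact ContinuousLinearMap.isUnit_iff_bijective.2 hbijn
  exact spectrum.mem_iff.1 hspec this

end Stmt14

end

open Stmt14 in
/-- For `B(r,s)` on `c₀` with `s ≠ 0`: the spectrum is the closed disc
`{λ : |λ-r| ≤ |s|}`, the point spectrum is empty, the residual spectrum is the open disc
`{λ : |λ-r| < |s|}`, and the continuous spectrum is the circle `{λ : |λ-r| = |s|}`. -/
theorem stmt_14 (r s : ℂ) (hs : s ≠ 0)
    (B : ZeroAtInftyContinuousMap ℕ ℂ →L[ℂ] ZeroAtInftyContinuousMap ℕ ℂ)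
    (hB0 : ∀ x : ZeroAtInftyContinuousMap ℕ ℂ, B x 0 = r * x 0)
    (hB : ∀ (x : ZeroAtInftyContinuousMap ℕ ℂ) (k : ℕ),
      B x (k + 1) = s * x k + r * x (k + 1)) :
    spectrum ℂ B = {lam : ℂ | ‖lam - r‖ ≤ ‖s‖} ∧
    (¬ ∃ (lam : ℂ) (x : ZeroAtInftyContinuousMap ℕ ℂ), x ≠ 0 ∧ B x = lam • x) ∧
    {lam : ℂ | Function.Injective ⇑(B - lam • 1) ∧ ¬ DenseRange ⇑(B - lam • 1)} =
      {lam : ℂ | ‖lam - r‖ < ‖s‖} ∧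
    {lam : ℂ | lam ∈ spectrum ℂ B ∧ Function.Injective ⇑(B - lam • 1) ∧
        DenseRange ⇑(B - lam • 1) ∧
        ¬ ∃ c > (0 : ℝ), ∀ x : ZeroAtInftyContinuousMap ℕ ℂ, c * ‖x‖ ≤ ‖(B - lam • 1) x‖} =
      {lam : ℂ | ‖lam - r‖ = ‖s‖} := by
  have hspec_eq : spectrum ℂ B = {lam : ℂ | ‖lam - r‖ ≤ ‖s‖} := by
    apply Set.Subset.antisymm
    · intro lam hl
      exact spec_subset r s B hB0 hB hl
    · have hball : {lam : ℂ | ‖lam - r‖ < ‖s‖} ⊆ spectrum ℂ B :=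
        fun lam hl => inSpec_of_notDense B lam (notDense r s B hs hB0 hB hl)
      have h1 : {lam : ℂ | ‖lam - r‖ ≤ ‖s‖}
          = Metric.closedBall r (‖s‖) := by
        ext z; simp [Metric.mem_closedBall, Complex.dist_eq]
      have h2 : {lam : ℂ | ‖lam - r‖ < ‖s‖}
          = Metric.ball r (‖s‖) := by
        ext z; simp [Metric.mem_ball, Complex.dist_eq]
      rw [h1, ← closure_ball r (ne_of_gt (norm_pos_iff.mpr hs))]
      calc closure (Metric.ball r (‖s‖))
          ⊆ closure (spectrum ℂ B) := closure_mono (h2 ▸ hball)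
        _ = spectrum ℂ B := (spectrum.isClosed (𝕜 := ℂ)
            (A := ZeroAtInftyContinuousMap ℕ ℂ →L[ℂ] ZeroAtInftyContinuousMap ℕ ℂ) B).closure_eq
  refine ⟨hspec_eq, ?_, ?_, ?_⟩
  · rintro ⟨lam, x, hx0, hxe⟩
    apply hx0
    have hTx : (B - lam • 1) x = 0 := by
      rw [ContinuousLinearMap.sub_apply, ContinuousLinearMap.smul_apply,
        ContinuousLinearMap.one_apply, hxe, sub_self]
    exact inj r s B hs hB0 hB lam (by rw [hTx, map_zero])
  · ext lam
    simp only [Set.mem_setOf_eq]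
    constructor
    · rintro ⟨hinj, hnd⟩
      by_contra hnlt
      push_neg at hnlt
      rcases eq_or_lt_of_le hnlt with heq | hlt
      · exact hnd (dense_circle r s B hs hB0 hB heq.symm)
      · have hnotspec : lam ∉ spectrum ℂ B := fun hmem =>
          absurd (spec_subset r s B hB0 hB hmem) (not_le.2 hlt)
        have hU : IsUnit ((@algebraMap ℂ (ZeroAtInftyContinuousMap ℕ ℂ →L[ℂ]
            ZeroAtInftyContinuousMap ℕ ℂ) _ _ ContinuousLinearMap.algebra) lam - B) := spectrum.notMem_iff.1 hnotspec
        exact hnd (surj_of_unit B lam hU).denseRange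
    · intro hlt
      exact ⟨inj r s B hs hB0 hB lam, notDense r s B hs hB0 hB hlt⟩
  · ext lam
    simp only [Set.mem_setOf_eq]
    constructor
    · rintro ⟨hspec, hinj, hdense, hnb⟩
      rcases eq_or_lt_of_le (spec_subset r s B hB0 hB hspec) with heq | hlt
      · exact heq
      · exact absurd hdense (notDense r s B hs hB0 hB hlt)
    · intro heq
      have hspec : lam ∈ spectrum ℂ B := by
        rw [hspec_eq]
        exact le_of_eq heq
      exact ⟨hspec, inj r s B hs hB0 hB lam, dense_circle r s B hs hB0 hB heq,
        not_bdd B lam hspec (inj r s B hs hB0 hB lam) (dense_circle r s B hs hB0 hB heq)⟩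
end

section
/- Let λ ∈ ℂ with (|λ-r₁|⋯|λ-r_l|)^{1/l} < (|s₁|⋯|s_{l'}|)^{1/l'} and λ ∉ {r₁,…,r_l}. Then the inverse matrix (B − λI)⁻¹ = (z_{nk}), which exists as a formal lower triangular inverse, satisfies sup_n Σ_k |z_{nk}| = ∞; in particular the inverse of B − λI is not a bounded operator. -/
open Filter Topology
open Fin.NatCast

lemma aux_prod_period {n : ℕ} [NeZero n] (F : Fin n → ℝ) (c : ℕ) :
    ∏ m ∈ Finset.range (c * n), F (↑m) = (∏ j, F j) ^ c := by
  induction c with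
  | zero => simp
  | succ c ih =>
    rw [Nat.succ_mul, Finset.prod_range_add, ih, pow_succ]
    congr 1
    have h1 : ∀ i : ℕ, ((c * n + i : ℕ) : Fin n) = (i : Fin n) := by
      intro i; push_cast; simp
    simp_rw [h1]
    rw [← Fin.prod_univ_eq_prod_range (fun m => F ↑m) n]
    simp

/-- If `(|λ-r₁|⋯|λ-r_l|)^{1/l} < (|s₁|⋯|s_{l'}|)^{1/l'}` and `λ ∉ {r₁,…,r_l}`,
then the formal lower-triangular inverse `(z_{nk})` of `B - λI` (given by forward substitution)
has unbounded row `ℓ¹`-norms: `sup_n Σ_k |z_{nk}| = ∞`. -/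
theorem stmt_15 (l l' : ℕ) [NeZero l] [NeZero l'] (r : Fin l → ℂ) (s : Fin l' → ℂ)
    (hs : ∀ j, s j ≠ 0) (lam : ℂ)
    (hlam : (∏ i, ‖lam - r i‖) ^ ((1 : ℝ) / l) <
      (∏ j, ‖s j‖) ^ ((1 : ℝ) / l'))
    (hne : ∀ i, lam ≠ r i)
    (z : ℕ → ℕ → ℂ)
    (hdiag : ∀ k : ℕ, z k k = (r (↑k) - lam)⁻¹)
    (hzero : ∀ n k : ℕ, n < k → z n k = 0)
    (hrec : ∀ n k : ℕ, k ≤ n → z (n + 1) k = -(s (↑n)) * z n k / (r (↑(n + 1)) - lam)) :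
    ¬ ∃ C : ℝ, ∀ n : ℕ, ∑' k, ‖z n k‖ ≤ C := by
  rintro ⟨C, hC⟩
  set P := ∏ i, ‖lam - r i‖ with hPdef
  set S := ∏ j, ‖s j‖ with hSdef
  have hP : 0 < P := Finset.prod_pos fun i _ => norm_pos_iff.mpr (sub_ne_zero.mpr (hne i))
  have hS : 0 < S := Finset.prod_pos fun j _ => norm_pos_iff.mpr (hs j)
  have hl : (l : ℝ) ≠ 0 := Nat.cast_ne_zero.mpr (NeZero.ne l)
  have hl' : (l' : ℝ) ≠ 0 := Nat.cast_ne_zero.mpr (NeZero.ne l')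
  -- key inequality P^l' < S^l
  have key : P ^ l' < S ^ l := by
    have hpos : (0:ℝ) < ((l * l' : ℕ) : ℝ) := by
      exact_mod_cast Nat.pos_of_ne_zero (Nat.mul_ne_zero (NeZero.ne l) (NeZero.ne l'))
    have h := Real.rpow_lt_rpow (Real.rpow_nonneg hP.le _) hlam hpos
    rw [← Real.rpow_mul hP.le, ← Real.rpow_mul hS.le] at h
    have e1 : (1 / (l:ℝ)) * ((l * l' : ℕ) : ℝ) = ((l' : ℕ) : ℝ) := by
      push_cast; field_simp
    have e2 : (1 / (l':ℝ)) * ((l * l' : ℕ) : ℝ) = ((l : ℕ) : ℝ) := by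
      push_cast; field_simp
    rw [e1, e2, Real.rpow_natCast, Real.rpow_natCast] at h
    exact h
  set ρ := S ^ l / P ^ l' with hρdef
  have hρ : 1 < ρ := (one_lt_div (pow_pos hP l')).mpr key
  -- growth factor function
  set g : ℕ → ℝ := fun m => ‖s ↑m‖ / ‖r ↑(m + 1) - lam‖ with hgdef
  -- formula for ‖z n 0‖
  have hform : ∀ n, ‖z n 0‖ = ‖z 0 0‖ * ∏ m ∈ Finset.range n, g m := by
    intro n
    induction n with
    | zero => simp
    | succ n ih =>
      rw [hrec n 0 (Nat.zero_le n), Finset.prod_range_succ, norm_div, norm_mul, norm_neg, ih]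
      simp only [hgdef]
      ring
  -- product over c full periods
  have hperiod : ∀ c : ℕ, ∏ m ∈ Finset.range (c * (l * l')), g m = ρ ^ c := by
    intro c
    have hsplit : ∏ m ∈ Finset.range (c * (l * l')), g m =
        (∏ m ∈ Finset.range (c * (l * l')), ‖s ↑m‖) /
          ∏ m ∈ Finset.range (c * (l * l')), ‖r ↑(m + 1) - lam‖ := by
      rw [← Finset.prod_div_distrib]
    have hnum : ∏ m ∈ Finset.range (c * (l * l')), ‖s ↑m‖ = S ^ (c * l) := by
      have : c * (l * l') = (c * l) * l' := by ring
      rw [this, aux_prod_period (fun j => ‖s j‖) (c * l)]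
    have hden : ∏ m ∈ Finset.range (c * (l * l')), ‖r ↑(m + 1) - lam‖
        = P ^ (c * l') := by
      set M := c * (l * l') with hMdef
      set H : ℕ → ℝ := fun m => ‖r ↑m - lam‖ with hHdef
      have hHM : H M = H 0 := by
        have : ((M : ℕ) : Fin l) = ((0 : ℕ) : Fin l) := by
          simp only [hMdef]
          push_cast
          simp
          exact Dvd.dvd.mul_left (Dvd.intro l' rfl) c
        simp only [hHdef, this]
      have h1 : ∏ m ∈ Finset.range (M + 1), H m = (∏ m ∈ Finset.range M, H (m + 1)) * H 0 :=
        Finset.prod_range_succ' H M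
      have h2 : ∏ m ∈ Finset.range (M + 1), H m = (∏ m ∈ Finset.range M, H m) * H M :=
        Finset.prod_range_succ H M
      have hH0 : H 0 ≠ 0 := by
        simp only [hHdef]
        exact ne_of_gt (norm_pos_iff.mpr (sub_ne_zero.mpr fun h => hne _ h.symm))
      have h3 : ∏ m ∈ Finset.range M, H (m + 1) = ∏ m ∈ Finset.range M, H m := by
        apply mul_right_cancel₀ hH0
        rw [← h1, h2, hHM]
      have h4 : ∏ m ∈ Finset.range M, H m = P ^ (c * l') := by
        have hM : M = (c * l') * l := by rw [hMdef]; ring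
        rw [hM, aux_prod_period (fun i => ‖r i - lam‖) (c * l')]
        congr 1
        exact Finset.prod_congr rfl fun i _ => norm_sub_rev _ _
      calc ∏ m ∈ Finset.range M, ‖r ↑(m + 1) - lam‖
          = ∏ m ∈ Finset.range M, H (m + 1) := rfl
        _ = ∏ m ∈ Finset.range M, H m := h3
        _ = P ^ (c * l') := h4
    rw [hsplit, hnum, hden, hρdef, div_pow, pow_mul, pow_mul]
    ring
  -- a0 > 0
  have ha0 : 0 < ‖z 0 0‖ := by
    rw [hdiag 0]
    exact norm_pos_iff.mpr (inv_ne_zero (sub_ne_zero.mpr fun h => hne _ h.symm))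
  -- unboundedness
  have htend : Tendsto (fun c : ℕ => ‖z 0 0‖ * ρ ^ c) atTop atTop :=
    (tendsto_pow_atTop_atTop_of_one_lt hρ).const_mul_atTop ha0
  obtain ⟨c, hc⟩ := (htend.eventually_gt_atTop C).exists
  set n := c * (l * l') with hndef
  have hrow : ‖z n 0‖ = ‖z 0 0‖ * ρ ^ c := by rw [hform n, hndef, hperiod c]
  have hsum : Summable fun k => ‖z n k‖ := by
    apply summable_of_ne_finset_zero (s := Finset.range (n + 1))
    intro k hk
    rw [hzero n k (by simp [Finset.mem_range] at hk; omega)]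
    simp
  have hle : ‖z n 0‖ ≤ ∑' k, ‖z n k‖ := Summable.le_tsum hsum 0 fun k _ => norm_nonneg _
  have := hC n
  rw [hrow] at hle
  linarith
end

section
/- With r₁ = 1 − i, r₂ = −i, r₃ = −1.5, r₄ = −i and s₁ = i, s₂ = 1 + i, s₃ = −2, s₄ = −1.5, s₅ = 1 − i, s₆ = −1, the spectrum of the operator B(r₁,…,r₄; s₁,…,s₆) on c₀ equals {λ ∈ ℂ : |λ − 1 + i| · |λ + i|² · |λ + 1.5| ≤ 6^{2/3}}. -/
open Filter Topology Complex
open Fin.NatCast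

noncomputable section
namespace Stmt17

abbrev E := ZeroAtInftyContinuousMap ℕ ℂ

def Complex.abs : AbsoluteValue ℂ ℝ where
  toFun z := ‖z‖
  map_mul' := norm_mul
  nonneg' := norm_nonneg
  eq_zero' _ := norm_eq_zero
  add_le' := norm_add_le

lemma Complex.norm_eq_abs (z : ℂ) : ‖z‖ = Complex.abs z := rfl

def dd (k : ℕ) : ℂ := ![1 - I, -I, -(3/2), -I] k
def ss (k : ℕ) : ℂ := ![I, 1 + I, -2, -(3/2), 1 - I, -1] k
def aa (lam : ℂ) (k : ℕ) : ℂ := lam - dd k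
def p (lam : ℂ) : ℂ := (lam - (1 - I)) * (lam + I) ^ 2 * (lam + 3/2)

lemma dd_per (k : ℕ) : dd (k + 4) = dd k := by simp [dd, Nat.cast_add]
lemma ss_per (k : ℕ) : ss (k + 6) = ss k := by simp [ss, Nat.cast_add]
lemma dd_per12 (k : ℕ) : dd (k + 12) = dd k := by
  rw [show k + 12 = k + 4 + 4 + 4 by ring, dd_per, dd_per, dd_per]
lemma ss_per12 (k : ℕ) : ss (k + 12) = ss k := by
  rw [show k + 12 = k + 6 + 6 by ring, ss_per, ss_per]

lemma dd_mod (k : ℕ) : dd k = dd (k % 4) := by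
  conv_lhs => rw [show k = k % 4 + 4 * (k / 4) from (Nat.mod_add_div _ _).symm]
  induction (k / 4) with
  | zero => rfl
  | succ t ih => rw [Nat.mul_succ, ← Nat.add_assoc, dd_per, ih]

lemma ss_ne (k : ℕ) : ss k ≠ 0 := by
  unfold ss; generalize (k : Fin 6) = i
  fin_cases i <;> norm_num [Complex.ext_iff]

def ww (lam : ℂ) : ℕ → ℂ
  | 0 => 1
  | k+1 => ss k / aa lam (k+1) * ww lam k

def q (lam : ℂ) (k : ℕ) : ℝ := Complex.abs (ss k / aa lam (k+1))

lemma q_per (lam : ℂ) (k : ℕ) : q lam (k + 12) = q lam k := by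
  have h : aa lam (k + 12 + 1) = aa lam (k + 1) := by
    unfold aa; rw [show k + 12 + 1 = (k+1) + 12 by ring, dd_per12]
  rw [q, ss_per12, h]; rfl

lemma q_mod (lam : ℂ) (k : ℕ) : q lam k = q lam (k % 12) := by
  conv_lhs => rw [show k = k % 12 + 12 * (k / 12) from (Nat.mod_add_div _ _).symm]
  induction (k / 12) with
  | zero => rfl
  | succ t ih => rw [Nat.mul_succ, ← Nat.add_assoc, q_per, ih]

lemma q_pos {lam : ℂ} (haa : ∀ k, aa lam k ≠ 0) (k : ℕ) : 0 < q lam k :=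
  AbsoluteValue.pos _ (div_ne_zero (ss_ne k) (haa (k+1)))

lemma ww_ne {lam : ℂ} (haa : ∀ k, aa lam k ≠ 0) (k : ℕ) : ww lam k ≠ 0 := by
  induction k with
  | zero => exact one_ne_zero
  | succ k ih => exact mul_ne_zero (div_ne_zero (ss_ne k) (haa (k+1))) ih

lemma waw {lam : ℂ} (haa : ∀ k, aa lam k ≠ 0) (k : ℕ) :
    aa lam (k+1) * ww lam (k+1) = ss k * ww lam k := by
  rw [ww]; field_simp; rw [mul_assoc]; exact mul_div_cancel_left₀ _ (haa (k+1))

lemma abs_ww_add (lam : ℂ) (j : ℕ) : ∀ n : ℕ,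
    Complex.abs (ww lam (j + n))
      = Complex.abs (ww lam j) * ∏ m ∈ Finset.range n, q lam (j + m) := by
  intro n
  induction n with
  | zero => simp
  | succ n ih =>
      rw [Finset.prod_range_succ, show j + (n+1) = (j + n) + 1 from rfl, ww, map_mul, ih, q]
      ring

lemma prod_q_shift {lam : ℂ} (haa : ∀ k, aa lam k ≠ 0) (j : ℕ) :
    ∏ m ∈ Finset.range 12, q lam (j + m) = ∏ m ∈ Finset.range 12, q lam m := by
  induction j with
  | zero => simp
  | succ j ih =>
      have h1 : ∏ m ∈ Finset.range 13, q lam (j+m)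
          = (∏ m ∈ Finset.range 12, q lam (j+(m+1))) * q lam (j+0) :=
        Finset.prod_range_succ' _ 12
      have h2 : ∏ m ∈ Finset.range 13, q lam (j+m)
          = (∏ m ∈ Finset.range 12, q lam (j+m)) * q lam (j+12) :=
        Finset.prod_range_succ _ 12
      have hper : q lam (j+12) = q lam (j+0) := by rw [q_per]; norm_num
      rw [hper] at h2
      have h3 : ∏ m ∈ Finset.range 12, q lam (j+(m+1)) = ∏ m ∈ Finset.range 12, q lam (j+m) :=
        mul_right_cancel₀ (q_pos haa (j+0)).ne' (h1.symm.trans h2)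
      calc ∏ m ∈ Finset.range 12, q lam (j+1+m)
          = ∏ m ∈ Finset.range 12, q lam (j+(m+1)) :=
            Finset.prod_congr rfl (fun m _ => by rw [show j+1+m = j+(m+1) by ring])
        _ = ∏ m ∈ Finset.range 12, q lam (j+m) := h3
        _ = ∏ m ∈ Finset.range 12, q lam m := ih

lemma prod_ss : (∏ m ∈ Finset.range 12, ss m) = -36 := by
  have h2 : (I:ℂ)^2 = -1 := I_sq
  have h6 : (I:ℂ)^6 = -1 := by rw [show (6:ℕ) = 2*3 from rfl, pow_mul, h2]; ring
  have h4 : (I:ℂ)^4 = 1 := by rw [show (4:ℕ) = 2*2 from rfl, pow_mul, h2]; ring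
  simp [Finset.prod_range_succ, show ss 0 = I from rfl, show ss 1 = 1 + I from rfl,
    show ss 2 = -2 from rfl, show ss 3 = -(3/2) from rfl, show ss 4 = 1 - I from rfl,
    show ss 5 = -1 from rfl, show ss 6 = I from rfl, show ss 7 = 1 + I from rfl,
    show ss 8 = -2 from rfl, show ss 9 = -(3/2) from rfl, show ss 10 = 1 - I from rfl,
    show ss 11 = -1 from rfl]
  ring_nf
  rw [h6, h2, h4]
  ring_nf

lemma prod_aa (lam : ℂ) : (∏ m ∈ Finset.range 12, aa lam (m + 1)) = (p lam) ^ 3 := by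
  simp only [Finset.prod_range_succ, Finset.prod_range_zero, aa,
    show dd 1 = -I from rfl, show dd 2 = -(3/2) from rfl,
    show dd 3 = -I from rfl, show dd 4 = 1 - I from rfl, show dd 5 = -I from rfl,
    show dd 6 = -(3/2) from rfl, show dd 7 = -I from rfl, show dd 8 = 1 - I from rfl,
    show dd 9 = -I from rfl, show dd 10 = -(3/2) from rfl, show dd 11 = -I from rfl,
    show dd 12 = 1 - I from rfl, p]
  ring

lemma prod_q_eq (lam : ℂ) :
    ∏ m ∈ Finset.range 12, q lam m = 36 / (Complex.abs (p lam))^3 := by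
  have h1 : ∏ m ∈ Finset.range 12, q lam m
      = Complex.abs (∏ m ∈ Finset.range 12, (ss m / aa lam (m+1))) := by
    rw [map_prod]
    rfl
  rw [h1, Finset.prod_div_distrib, prod_ss, prod_aa, map_div₀, map_pow]
  norm_num
  have h36 : Complex.abs 36 = 36 := by show ‖(36:ℂ)‖ = 36; norm_num
  rw [h36]

lemma abs_ww12 {lam : ℂ} (haa : ∀ k, aa lam k ≠ 0) (j : ℕ) :
    Complex.abs (ww lam (j + 12))
      = Complex.abs (ww lam j) * (36 / (Complex.abs (p lam))^3) := by
  rw [abs_ww_add, prod_q_shift haa, prod_q_eq]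

lemma p_eq (lam : ℂ) : p lam = aa lam 0 * aa lam 1 * aa lam 3 * aa lam 2 := by
  simp only [aa, show dd 0 = 1 - I from rfl, show dd 1 = -I from rfl,
    show dd 2 = -(3/2) from rfl, show dd 3 = -I from rfl, p]
  ring

lemma aa_ne_of_p {lam : ℂ} (hp : p lam ≠ 0) : ∀ k, aa lam k ≠ 0 := by
  have h := hp
  rw [p_eq] at h
  have h0 : aa lam 0 ≠ 0 := fun e => h (by rw [e]; ring)
  have h1 : aa lam 1 ≠ 0 := fun e => h (by rw [e]; ring)
  have h2 : aa lam 2 ≠ 0 := fun e => h (by rw [e]; ring)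
  have h3 : aa lam 3 ≠ 0 := fun e => h (by rw [e]; ring)
  intro k
  have : aa lam k = aa lam (k % 4) := by unfold aa; rw [← dd_mod]
  rw [this]
  have hk : k % 4 < 4 := Nat.mod_lt _ (by norm_num)
  interval_cases h : (k % 4) <;> assumption

/-- element of c₀ from a sequence tending to zero -/
def mk0 (f : ℕ → ℂ) (hf : Tendsto f atTop (𝓝 0)) : E :=
  ⟨⟨f, continuous_of_discreteTopology⟩, by rw [cocompact_eq_atTop]; exact hf⟩

@[simp] lemma mk0_apply (f : ℕ → ℂ) (hf) (k : ℕ) : mk0 f hf k = f k := rfl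

lemma tendsto_c0 (x : E) : Tendsto (fun k => x k) atTop (𝓝 0) := by
  have := x.zero_at_infty'
  rwa [cocompact_eq_atTop] at this

lemma apply_le_norm (x : E) (k : ℕ) : Complex.abs (x k) ≤ ‖x‖ := by
  rw [← ZeroAtInftyContinuousMap.norm_toBCF_eq_norm, ← Complex.norm_eq_abs]
  exact x.toBCF.norm_coe_le_norm k

/-- the indicator basis vector -/
def ev (j : ℕ) : E :=
  mk0 (fun n => if n = j then 1 else 0) <| by
    apply tendsto_const_nhds.congr' (_ : (fun _ => (0:ℂ)) =ᶠ[atTop] _)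
    filter_upwards [eventually_gt_atTop j] with n hn
    simp [Nat.ne_of_gt hn]

lemma ev_apply (j n : ℕ) : ev j n = if n = j then 1 else 0 := rfl

lemma surj_of_isUnit {A : E →L[ℂ] E} (h : IsUnit A) (y : E) : ∃ x : E, A x = y := by
  obtain ⟨u, hu⟩ := h
  refine ⟨(↑u⁻¹ : E →L[ℂ] E) y, ?_⟩
  calc A ((↑u⁻¹ : E →L[ℂ] E) y) = ((↑u * ↑u⁻¹ : E →L[ℂ] E)) y := by rw [hu]; rfl
    _ = y := by rw [u.mul_inv]; rfl

lemma not_isUnit {lam : ℂ} (A : E →L[ℂ] E)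
    (hA0 : ∀ x : E, A x 0 = aa lam 0 * x 0)
    (hA : ∀ (x : E) (k : ℕ), A x (k+1) = aa lam (k+1) * x (k+1) - ss k * x k)
    (hle : (Complex.abs (p lam)) ^ 3 ≤ 36) : ¬ IsUnit A := by
  classical
  intro hU
  by_cases hz : ∃ k, aa lam k = 0
  · -- minimal zero of the diagonal: e_j not in the range
    let j := Nat.find hz
    have hj : aa lam j = 0 := Nat.find_spec hz
    have hjmin : ∀ m, m < j → aa lam m ≠ 0 := fun m hm => Nat.find_min hz hm
    obtain ⟨x, hx⟩ := surj_of_isUnit hU (ev j)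
    have happ : ∀ n, A x n = ev j n := fun n => by rw [hx]
    have hxm : ∀ m, m < j → x m = 0 := by
      intro m
      induction m with
      | zero =>
          intro h0
          have := happ 0
          rw [hA0, ev_apply, if_neg (Nat.ne_of_lt h0)] at this
          exact (mul_eq_zero.1 this).resolve_left (hjmin 0 h0)
      | succ m ih =>
          intro h
          have hm := ih (lt_trans (Nat.lt_succ_self m) h)
          have := happ (m+1)
          rw [hA, ev_apply, if_neg (Nat.ne_of_lt h), hm, mul_zero, sub_zero] at this
          exact (mul_eq_zero.1 this).resolve_left (hjmin (m+1) h)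
    cases hj' : j with
    | zero =>
        have h0 := happ 0
        rw [hj'] at hj
        rw [hA0, ev_apply, if_pos hj'.symm, hj, zero_mul] at h0
        exact zero_ne_one h0
    | succ m =>
        have h1 := happ (m+1)
        rw [hj'] at hj
        have hmj : m < j := by rw [hj']; exact Nat.lt_succ_self m
        rw [hA, ev_apply, if_pos hj'.symm, hxm m hmj, hj, zero_mul, mul_zero, sub_zero] at h1
        exact zero_ne_one h1
  · -- no zero: the formal solution of A x = e₀ does not vanish at infinity
    push_neg at hz
    have haa : ∀ k, aa lam k ≠ 0 := hz
    obtain ⟨x, hx⟩ := surj_of_isUnit hU (ev 0)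
    have happ : ∀ n, A x n = ev 0 n := fun n => by rw [hx]
    have hxk : ∀ k, x k = ww lam k * (aa lam 0)⁻¹ := by
      intro k
      induction k with
      | zero =>
          have h0 := happ 0
          rw [hA0, ev_apply, if_pos rfl] at h0
          rw [show ww lam 0 = 1 from rfl, one_mul]
          exact eq_inv_of_mul_eq_one_right h0
      | succ k ih =>
          have := happ (k+1)
          rw [hA, ev_apply, if_neg (Nat.succ_ne_zero k), ih, sub_eq_zero] at this
          have h' : x (k+1) = ss k * (ww lam k * (aa lam 0)⁻¹) / aa lam (k+1) := by
            rw [← this]; field_simp [haa (k+1)]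
          rw [h', ww]; field_simp
    -- p lam ≠ 0 so θ := 36 / |p|³ ≥ 1
    have hp : p lam ≠ 0 := by
      rw [p_eq]
      exact mul_ne_zero (mul_ne_zero (mul_ne_zero (haa 0) (haa 1)) (haa 3)) (haa 2)
    have hppos : 0 < Complex.abs (p lam) := AbsoluteValue.pos _ hp
    have hθ : (1:ℝ) ≤ 36 / (Complex.abs (p lam))^3 := by
      rw [le_div_iff₀ (by positivity)]; linarith
    have hwt : ∀ t : ℕ, Complex.abs (ww lam (12*t)) = (36 / (Complex.abs (p lam))^3)^t := by
      intro t
      induction t with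
      | zero => simp [show ww lam 0 = 1 from rfl]
      | succ t ih =>
          rw [show 12*(t+1) = 12*t + 12 by ring, abs_ww12 haa, ih]
          exact (pow_succ _ _).symm
    have hlow : ∀ t : ℕ, (Complex.abs (aa lam 0))⁻¹ ≤ Complex.abs (x (12*t)) := by
      intro t
      rw [hxk, map_mul, map_inv₀]
      have h1 : (1:ℝ) ≤ Complex.abs (ww lam (12*t)) := by
        rw [hwt]; exact one_le_pow₀ hθ
      nlinarith [inv_pos.2 (AbsoluteValue.pos Complex.abs (haa 0)), h1]
    have h12 : Tendsto (fun t : ℕ => 12*t) atTop atTop :=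
      tendsto_atTop_atTop_of_monotone (fun a b h => by omega) (fun b => ⟨b, by omega⟩)
    have hten : Tendsto (fun t => x (12*t)) atTop (𝓝 0) := (tendsto_c0 x).comp h12
    have hεpos : 0 < (Complex.abs (aa lam 0))⁻¹ :=
      inv_pos.2 (AbsoluteValue.pos Complex.abs (haa 0))
    obtain ⟨N, hN⟩ := (Metric.tendsto_atTop.1 hten _ hεpos)
    have := hN N le_rfl
    rw [dist_zero_right, Complex.norm_eq_abs] at this
    exact absurd (hlow N) (not_le.2 this)

lemma geom_tail {r : ℝ} (h0 : 0 ≤ r) (h1 : r < 1) (n : ℕ) :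
    ∑ m ∈ Finset.range n, r^m ≤ 1/(1-r) := by
  rw [← Nat.Ico_zero_eq_range]
  simpa using geom_sum_Ico_le_of_lt_one h0 h1 (m := 0) (n := n)

lemma sum_reflect (r : ℝ) (k : ℕ) :
    ∑ j ∈ Finset.range (k+1), r^(k-j) = ∑ m ∈ Finset.range (k+1), r^m := by
  have := Finset.sum_range_reflect (fun m => r^m) (k+1)
  simpa using this

lemma conv_bound {r : ℝ} (h0 : 0 ≤ r) (h1 : r < 1) (v : ℕ → ℝ)
    (hv : ∀ j, 0 ≤ v j) (M : ℝ) (hM : ∀ j, v j ≤ M) (k : ℕ) :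
    ∑ j ∈ Finset.range (k+1), r^(k-j) * v j ≤ M * (1/(1-r)) := by
  have hM0 : 0 ≤ M := le_trans (hv 0) (hM 0)
  calc ∑ j ∈ Finset.range (k+1), r^(k-j) * v j
      ≤ ∑ j ∈ Finset.range (k+1), r^(k-j) * M := by
        refine Finset.sum_le_sum fun j _ => ?_
        exact mul_le_mul_of_nonneg_left (hM j) (pow_nonneg h0 _)
    _ = M * ∑ j ∈ Finset.range (k+1), r^(k-j) := by rw [Finset.mul_sum]; congr 1; ext j; ring
    _ = M * ∑ m ∈ Finset.range (k+1), r^m := by rw [sum_reflect]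
    _ ≤ M * (1/(1-r)) := mul_le_mul_of_nonneg_left (geom_tail h0 h1 _) hM0

lemma conv_zero {r : ℝ} (h0 : 0 < r) (h1 : r < 1) (v : ℕ → ℝ)
    (hv : ∀ j, 0 ≤ v j) (M : ℝ) (hM : ∀ j, v j ≤ M)
    (hv0 : Tendsto v atTop (𝓝 0)) :
    Tendsto (fun k => ∑ j ∈ Finset.range (k+1), r^(k-j) * v j) atTop (𝓝 0) := by
  have hM0 : 0 ≤ M := le_trans (hv 0) (hM 0)
  have h1r : 0 < 1 - r := by linarith
  rw [Metric.tendsto_atTop]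
  intro ε hε
  have hδpos : 0 < ε * (1-r)/4 := by positivity
  obtain ⟨N₁, hN₁⟩ := Metric.tendsto_atTop.1 hv0 _ hδpos
  have hvs : ∀ j, N₁ ≤ j → v j ≤ ε * (1-r)/4 := by
    intro j hj
    have := hN₁ j hj
    rw [Real.dist_eq, sub_zero, _root_.abs_of_nonneg (hv j)] at this
    linarith
  have hε2 : 0 < ε/(2*((N₁:ℝ)*M+1)) := by positivity
  obtain ⟨m₀, hm₀⟩ := Metric.tendsto_atTop.1
    (tendsto_pow_atTop_nhds_zero_of_lt_one h0.le h1) _ hε2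
  refine ⟨N₁ + m₀, fun k hk => ?_⟩
  have hkN : N₁ ≤ k := le_trans (Nat.le_add_right _ _) hk
  have hsplit : ∑ j ∈ Finset.range (k+1), r^(k-j) * v j
      = (∑ j ∈ Finset.Ico 0 N₁, r^(k-j) * v j) + ∑ j ∈ Finset.Ico N₁ (k+1), r^(k-j) * v j := by
    rw [Finset.sum_Ico_consecutive _ (Nat.zero_le _) (by omega), Nat.Ico_zero_eq_range]
  -- head
  have hhead : ∑ j ∈ Finset.Ico 0 N₁, r^(k-j) * v j ≤ (N₁:ℝ) * (M * r^(k+1-N₁)) := by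
    calc ∑ j ∈ Finset.Ico 0 N₁, r^(k-j) * v j
        ≤ ∑ j ∈ Finset.Ico 0 N₁, M * r^(k+1-N₁) := by
          refine Finset.sum_le_sum fun j hj => ?_
          have hjN : j < N₁ := (Finset.mem_Ico.1 hj).2
          have hle : r^(k-j) ≤ r^(k+1-N₁) := pow_le_pow_of_le_one h0.le h1.le (by omega)
          calc r^(k-j) * v j ≤ r^(k+1-N₁) * M :=
                mul_le_mul hle (hM j) (hv j) (pow_nonneg h0.le _)
            _ = M * r^(k+1-N₁) := by ring
      _ = (N₁:ℝ) * (M * r^(k+1-N₁)) := by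
          rw [Finset.sum_const, Nat.card_Ico, Nat.sub_zero, nsmul_eq_mul]
  have hpow : r^(k+1-N₁) < ε/(2*((N₁:ℝ)*M+1)) := by
    have := hm₀ (k+1-N₁) (by omega)
    rwa [Real.dist_eq, sub_zero, _root_.abs_of_nonneg (pow_nonneg h0.le _)] at this
  have hhead2 : (N₁:ℝ) * (M * r^(k+1-N₁)) ≤ ε/2 := by
    have hNM : (0:ℝ) ≤ (N₁:ℝ)*M := mul_nonneg (Nat.cast_nonneg _) hM0
    have h2 : (N₁:ℝ) * (M * r^(k+1-N₁)) ≤ ((N₁:ℝ)*M+1) * r^(k+1-N₁) := by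
      have := pow_nonneg h0.le (k+1-N₁)
      nlinarith
    have h3 : ((N₁:ℝ)*M+1) * r^(k+1-N₁) ≤ ((N₁:ℝ)*M+1) * (ε/(2*((N₁:ℝ)*M+1))) :=
      mul_le_mul_of_nonneg_left hpow.le (by linarith)
    have h4 : ((N₁:ℝ)*M+1) * (ε/(2*((N₁:ℝ)*M+1))) = ε/2 := by
      field_simp
    linarith
  -- tail
  have htail : ∑ j ∈ Finset.Ico N₁ (k+1), r^(k-j) * v j ≤ ε/4 := by
    calc ∑ j ∈ Finset.Ico N₁ (k+1), r^(k-j) * v j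
        ≤ ∑ j ∈ Finset.Ico N₁ (k+1), r^(k-j) * (ε * (1-r)/4) := by
          refine Finset.sum_le_sum fun j hj => ?_
          exact mul_le_mul_of_nonneg_left (hvs j (Finset.mem_Ico.1 hj).1) (pow_nonneg h0.le _)
      _ = (ε * (1-r)/4) * ∑ j ∈ Finset.Ico N₁ (k+1), r^(k-j) := by
          rw [Finset.mul_sum]; congr 1; ext j; ring
      _ ≤ (ε * (1-r)/4) * (1/(1-r)) := by
          refine mul_le_mul_of_nonneg_left ?_ (by positivity)
          calc ∑ j ∈ Finset.Ico N₁ (k+1), r^(k-j)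
              ≤ ∑ j ∈ Finset.range (k+1), r^(k-j) := by
                refine Finset.sum_le_sum_of_subset_of_nonneg ?_ (fun j _ _ => pow_nonneg h0.le _)
                intro j hj
                rw [Finset.mem_range]
                exact (Finset.mem_Ico.1 hj).2
            _ = ∑ m ∈ Finset.range (k+1), r^m := sum_reflect r k
            _ ≤ 1/(1-r) := geom_tail h0.le h1 _
      _ = ε/4 := by field_simp
  have hpos : 0 ≤ ∑ j ∈ Finset.range (k+1), r^(k-j) * v j :=
    Finset.sum_nonneg fun j _ => mul_nonneg (pow_nonneg h0.le _) (hv j)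
  rw [Real.dist_eq, sub_zero, _root_.abs_of_nonneg hpos, hsplit]
  linarith

lemma isUnitA {lam : ℂ} (A : E →L[ℂ] E)
    (hA0 : ∀ x : E, A x 0 = aa lam 0 * x 0)
    (hA : ∀ (x : E) (k : ℕ), A x (k+1) = aa lam (k+1) * x (k+1) - ss k * x k)
    (hgt : 36 < (Complex.abs (p lam)) ^ 3) : IsUnit A := by
  have habs0 : (0:ℝ) ≤ Complex.abs (p lam) := AbsoluteValue.nonneg _ _
  have hppos : 0 < Complex.abs (p lam) := by
    rcases habs0.lt_or_eq with h | h
    · exact h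
    · rw [← h] at hgt; norm_num at hgt
  have hp : p lam ≠ 0 := fun h => by rw [h] at hppos; simp at hppos
  have haa := aa_ne_of_p hp
  have hwne := ww_ne haa
  set θ : ℝ := 36 / (Complex.abs (p lam))^3 with hθdef
  have hθ0 : 0 < θ := by positivity
  have hθ1 : θ < 1 := by rw [hθdef, div_lt_one (by positivity)]; exact hgt
  set ρ : ℝ := θ ^ ((12:ℝ)⁻¹) with hρdef
  have hρ0 : 0 < ρ := Real.rpow_pos_of_pos hθ0 _
  have hρ1 : ρ < 1 := Real.rpow_lt_one hθ0.le hθ1 (by norm_num)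
  have hρ12 : ρ^(12:ℕ) = θ := by
    rw [hρdef, ← Real.rpow_natCast (θ ^ ((12:ℝ)⁻¹)) 12, ← Real.rpow_mul hθ0.le]
    norm_num
  have hQne : (Finset.range 12).Nonempty := ⟨0, by norm_num⟩
  set Q : ℝ := max 1 ((Finset.range 12).sup' hQne (q lam)) with hQdef
  have hQ1 : (1:ℝ) ≤ Q := le_max_left _ _
  have hQ0 : (0:ℝ) < Q := lt_of_lt_of_le one_pos hQ1
  have hq_le : ∀ k, q lam k ≤ Q := by
    intro k
    rw [q_mod]
    exact le_trans (Finset.le_sup' (q lam) (Finset.mem_range.2 (Nat.mod_lt _ (by norm_num))))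
      (le_max_right _ _)
  have hstep : ∀ j t : ℕ, Complex.abs (ww lam (j + 12*t)) = Complex.abs (ww lam j) * θ^t := by
    intro j t
    induction t with
    | zero => simp
    | succ t ih =>
        rw [show j + 12*(t+1) = (j + 12*t) + 12 by ring, abs_ww12 haa, ih, ← hθdef]
        rw [pow_succ]; ring
  have hpartial : ∀ j r : ℕ, r ≤ 11 →
      Complex.abs (ww lam (j + r)) ≤ Complex.abs (ww lam j) * Q^11 := by
    intro j r hr
    rw [abs_ww_add]
    have h1 : ∏ m ∈ Finset.range r, q lam (j+m) ≤ Q^r := by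
      calc ∏ m ∈ Finset.range r, q lam (j+m) ≤ ∏ _m ∈ Finset.range r, Q :=
            Finset.prod_le_prod (fun m _ => (q_pos haa _).le) (fun m _ => hq_le _)
        _ = Q^r := by rw [Finset.prod_const, Finset.card_range]
    have h2 : Q^r ≤ Q^11 := pow_le_pow_right₀ hQ1 hr
    exact mul_le_mul_of_nonneg_left (h1.trans h2) (AbsoluteValue.nonneg _ _)
  set C : ℝ := Q^11 / θ with hCdef
  have hC0 : 0 < C := by positivity
  have hker : ∀ j n, Complex.abs (ww lam (j+n)) ≤ Complex.abs (ww lam j) * (C * ρ^n) := by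
    intro j n
    have hmod : 12*(n/12) + n % 12 = n := Nat.div_add_mod n 12
    set t := n / 12 with ht
    set r := n % 12 with hrr
    have hr11 : r ≤ 11 := by omega
    have hθρ : θ^(t+1) ≤ ρ^n := by
      have e1 : ρ^n = θ^t * ρ^r := by
        rw [show n = 12*t + r by omega, pow_add, pow_mul, hρ12]
      have e2 : ρ^(12:ℕ) ≤ ρ^r := pow_le_pow_of_le_one hρ0.le hρ1.le (by omega)
      have e3 : θ ≤ ρ^r := by rw [← hρ12]; exact e2
      rw [e1, pow_succ]
      exact mul_le_mul_of_nonneg_left e3 (pow_nonneg hθ0.le _)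
    have hQ11 : (0:ℝ) ≤ Q^11 := by positivity
    calc Complex.abs (ww lam (j+n)) = Complex.abs (ww lam (j + 12*t + r)) := by
          rw [show j + n = j + 12*t + r by omega]
      _ ≤ Complex.abs (ww lam (j + 12*t)) * Q^11 := hpartial _ _ hr11
      _ = Complex.abs (ww lam j) * θ^t * Q^11 := by rw [hstep]
      _ ≤ Complex.abs (ww lam j) * (C * ρ^n) := by
          have key : θ^t * Q^11 ≤ C * ρ^n := by
            rw [hCdef, div_mul_eq_mul_div, le_div_iff₀ hθ0]
            have := mul_le_mul_of_nonneg_right hθρ hQ11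
            calc θ^t * Q^11 * θ = θ^(t+1) * Q^11 := by rw [pow_succ]; ring
              _ ≤ ρ^n * Q^11 := this
              _ = Q^11 * ρ^n := by ring
          calc Complex.abs (ww lam j) * θ^t * Q^11
              = Complex.abs (ww lam j) * (θ^t * Q^11) := by ring
            _ ≤ Complex.abs (ww lam j) * (C * ρ^n) :=
                mul_le_mul_of_nonneg_left key (AbsoluteValue.nonneg _ _)
  have hA4 : (Finset.range 4).Nonempty := ⟨0, by norm_num⟩
  set A₀ : ℝ := (Finset.range 4).sup' hA4 (fun m => (Complex.abs (aa lam m))⁻¹) with hA₀def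
  have hA₀le : ∀ k, (Complex.abs (aa lam k))⁻¹ ≤ A₀ := by
    intro k
    have h : aa lam k = aa lam (k % 4) := by unfold aa; rw [← dd_mod]
    rw [h]
    exact Finset.le_sup' (fun m => (Complex.abs (aa lam m))⁻¹)
      (Finset.mem_range.2 (Nat.mod_lt _ (by norm_num)))
  have hA₀pos : 0 < A₀ :=
    lt_of_lt_of_le (inv_pos.2 (AbsoluteValue.pos _ (haa 0))) (hA₀le 0)
  set K : ℝ := C * A₀ * (1/(1-ρ)) with hKdef
  have h1ρ : 0 < 1 - ρ := by linarith
  have hK0 : 0 ≤ K := by positivity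
  set Rf : E → ℕ → ℂ :=
    fun y k => ww lam k * ∑ j ∈ Finset.range (k+1), y j * (ww lam j * aa lam j)⁻¹ with hRf
  have hterm : ∀ (y : E) (k j : ℕ), j ≤ k →
      Complex.abs (ww lam k * (y j * (ww lam j * aa lam j)⁻¹))
        ≤ C * ρ^(k-j) * (A₀ * Complex.abs (y j)) := by
    intro y k j hj
    have h1 : Complex.abs (ww lam k) ≤ Complex.abs (ww lam j) * (C * ρ^(k-j)) := by
      have := hker j (k-j)
      rwa [Nat.add_sub_cancel' hj] at this
    have hwj : (0:ℝ) < Complex.abs (ww lam j) := AbsoluteValue.pos _ (hwne j)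
    have haj : (0:ℝ) < Complex.abs (aa lam j) := AbsoluteValue.pos _ (haa j)
    rw [map_mul, map_mul, map_inv₀, map_mul]
    calc Complex.abs (ww lam k) * (Complex.abs (y j) * (Complex.abs (ww lam j) * Complex.abs (aa lam j))⁻¹)
        ≤ (Complex.abs (ww lam j) * (C * ρ^(k-j)))
            * (Complex.abs (y j) * (Complex.abs (ww lam j) * Complex.abs (aa lam j))⁻¹) := by
          refine mul_le_mul_of_nonneg_right h1 ?_
          positivity
      _ = (C * ρ^(k-j)) * ((Complex.abs (aa lam j))⁻¹ * Complex.abs (y j)) := by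
          field_simp
      _ ≤ (C * ρ^(k-j)) * (A₀ * Complex.abs (y j)) := by
          refine mul_le_mul_of_nonneg_left ?_ (by positivity)
          exact mul_le_mul_of_nonneg_right (hA₀le j) (AbsoluteValue.nonneg _ _)
  have habsRf : ∀ (y : E) (k : ℕ), Complex.abs (Rf y k)
      ≤ (C * A₀) * ∑ j ∈ Finset.range (k+1), ρ^(k-j) * Complex.abs (y j) := by
    intro y k
    calc Complex.abs (Rf y k)
        = Complex.abs (∑ j ∈ Finset.range (k+1), ww lam k * (y j * (ww lam j * aa lam j)⁻¹)) := by
          simp only [hRf]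
          rw [Finset.mul_sum]
      _ ≤ ∑ j ∈ Finset.range (k+1),
            Complex.abs (ww lam k * (y j * (ww lam j * aa lam j)⁻¹)) :=
          AbsoluteValue.sum_le _ _ _
      _ ≤ ∑ j ∈ Finset.range (k+1), C * ρ^(k-j) * (A₀ * Complex.abs (y j)) := by
          refine Finset.sum_le_sum fun j hj => ?_
          exact hterm y k j (Finset.mem_range_succ_iff.1 hj)
      _ = (C * A₀) * ∑ j ∈ Finset.range (k+1), ρ^(k-j) * Complex.abs (y j) := by
          rw [Finset.mul_sum]; congr 1; ext j; ring
  have hRb : ∀ (y : E) (k : ℕ), Complex.abs (Rf y k) ≤ K * ‖y‖ := by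
    intro y k
    have hsum : ∑ j ∈ Finset.range (k+1), ρ^(k-j) * Complex.abs (y j) ≤ ‖y‖ * (1/(1-ρ)) :=
      conv_bound hρ0.le hρ1 _ (fun j => AbsoluteValue.nonneg _ _) ‖y‖
        (fun j => apply_le_norm y j) k
    calc Complex.abs (Rf y k) ≤ (C * A₀) * ∑ j ∈ Finset.range (k+1), ρ^(k-j) * Complex.abs (y j) :=
          habsRf y k
      _ ≤ (C * A₀) * (‖y‖ * (1/(1-ρ))) :=
          mul_le_mul_of_nonneg_left hsum (by positivity)
      _ = K * ‖y‖ := by rw [hKdef]; ring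
  have hRt : ∀ y : E, Tendsto (Rf y) atTop (𝓝 0) := by
    intro y
    have hb : ∀ k, ‖Rf y k‖ ≤ (C * A₀) * ∑ j ∈ Finset.range (k+1), ρ^(k-j) * Complex.abs (y j) := by
      intro k
      rw [Complex.norm_eq_abs]
      exact habsRf y k
    have hs : Tendsto (fun k => (C * A₀) *
        ∑ j ∈ Finset.range (k+1), ρ^(k-j) * Complex.abs (y j)) atTop (𝓝 0) := by
      have h0' := conv_zero hρ0 hρ1 (fun j => Complex.abs (y j))
        (fun j => AbsoluteValue.nonneg _ _) ‖y‖ (fun j => apply_le_norm y j) ?_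
      · simpa using h0'.const_mul (C * A₀)
      · have := (tendsto_c0 y).norm
        simpa [Complex.norm_eq_abs] using this
    exact squeeze_zero_norm hb hs
  set Rl : E →ₗ[ℂ] E :=
    { toFun := fun y => mk0 (Rf y) (hRt y)
      map_add' := fun y z => by
        apply ZeroAtInftyContinuousMap.ext
        intro k
        have hadd : ∀ j, (y + z) j = y j + z j := fun j => rfl
        show Rf (y + z) k = Rf y k + Rf z k
        simp only [hRf, hadd, add_mul, Finset.sum_add_distrib, mul_add]
      map_smul' := fun c y => by
        apply ZeroAtInftyContinuousMap.ext
        intro k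
        have hsmul : ∀ j, (c • y) j = c * y j := fun j => rfl
        show Rf (c • y) k = c * Rf y k
        simp only [hRf, hsmul]
        rw [show (∑ j ∈ Finset.range (k+1), c * y j * (ww lam j * aa lam j)⁻¹)
            = c * ∑ j ∈ Finset.range (k+1), y j * (ww lam j * aa lam j)⁻¹ by
          rw [Finset.mul_sum]; exact Finset.sum_congr rfl fun j _ => by ring]
        ring } with hRl
  have hRlb : ∀ y : E, ‖Rl y‖ ≤ K * ‖y‖ := by
    intro y
    rw [← ZeroAtInftyContinuousMap.norm_toBCF_eq_norm]
    refine (BoundedContinuousFunction.norm_le (mul_nonneg hK0 (norm_nonneg y))).2 ?_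
    intro k
    rw [Complex.norm_eq_abs]
    exact hRb y k
  set R : E →L[ℂ] E := Rl.mkContinuous K hRlb with hR
  have hR_apply : ∀ (y : E) (k : ℕ), R y k = Rf y k := fun y k => rfl
  -- A ∘ R = 1
  have hAR : A * R = 1 := by
    refine ContinuousLinearMap.ext fun y => ZeroAtInftyContinuousMap.ext fun n => ?_
    have hARy : (A * R) y n = A (R y) n := rfl
    have h1y : (1 : E →L[ℂ] E) y n = y n := rfl
    rw [hARy, h1y]
    cases n with
    | zero =>
        rw [hA0, hR_apply]
        simp only [hRf, zero_add, Finset.range_one, Finset.sum_singleton,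
          show ww lam 0 = (1:ℂ) from rfl, one_mul]
        rw [mul_comm (y 0) _, ← mul_assoc, mul_inv_cancel₀ (haa 0), one_mul]
    | succ k =>
        rw [hA, hR_apply, hR_apply]
        simp only [hRf]
        rw [Finset.sum_range_succ]
        set S := ∑ j ∈ Finset.range (k+1), y j * (ww lam j * aa lam j)⁻¹ with hS
        have hw := waw haa k
        have hinv : (ww lam (k+1) * aa lam (k+1)) * (ww lam (k+1) * aa lam (k+1))⁻¹ = 1 :=
          mul_inv_cancel₀ (mul_ne_zero (hwne (k+1)) (haa (k+1)))
        calc aa lam (k+1) * (ww lam (k+1) * (S + y (k+1) * (ww lam (k+1) * aa lam (k+1))⁻¹))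
              - ss k * (ww lam k * S)
            = (aa lam (k+1) * ww lam (k+1) - ss k * ww lam k) * S
              + ((ww lam (k+1) * aa lam (k+1)) * (ww lam (k+1) * aa lam (k+1))⁻¹) * y (k+1) := by
              ring
          _ = y (k+1) := by rw [hinv, hw]; ring
  -- R ∘ A = 1
  have htel : ∀ (x : E) (k : ℕ),
      ∑ j ∈ Finset.range (k+1), (A x) j * (ww lam j * aa lam j)⁻¹ = x k * (ww lam k)⁻¹ := by
    intro x k
    induction k with
    | zero =>
        rw [Finset.sum_range_one, hA0, show ww lam 0 = (1:ℂ) from rfl, one_mul, inv_one, mul_one]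
        rw [mul_comm (aa lam 0) (x 0), mul_assoc, mul_inv_cancel₀ (haa 0), mul_one]
    | succ k ih =>
        rw [Finset.sum_range_succ, ih, hA]
        have hvw : (ww lam k)⁻¹ * ww lam k = 1 := inv_mul_cancel₀ (hwne k)
        have hv1 : (ww lam (k+1) * aa lam (k+1))⁻¹ * (ww lam (k+1) * aa lam (k+1)) = 1 :=
          inv_mul_cancel₀ (mul_ne_zero (hwne (k+1)) (haa (k+1)))
        have hv2 : (ww lam (k+1))⁻¹ * ww lam (k+1) = 1 := inv_mul_cancel₀ (hwne (k+1))
        have hwc : ww lam (k+1) * aa lam (k+1) = ss k * ww lam k := by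
          rw [mul_comm]; exact waw haa k
        refine mul_right_cancel₀ (mul_ne_zero (hwne (k+1)) (haa (k+1))) ?_
        calc (x k * (ww lam k)⁻¹
              + (aa lam (k+1) * x (k+1) - ss k * x k) * (ww lam (k+1) * aa lam (k+1))⁻¹)
                * (ww lam (k+1) * aa lam (k+1))
            = x k * (ww lam k)⁻¹ * (ww lam (k+1) * aa lam (k+1))
              + ((ww lam (k+1) * aa lam (k+1))⁻¹ * (ww lam (k+1) * aa lam (k+1)))
                  * (aa lam (k+1) * x (k+1) - ss k * x k) := by ring
          _ = x k * (ww lam k)⁻¹ * (ss k * ww lam k)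
              + 1 * (aa lam (k+1) * x (k+1) - ss k * x k) := by rw [hv1, hwc]
          _ = ss k * x k * ((ww lam k)⁻¹ * ww lam k)
              + (aa lam (k+1) * x (k+1) - ss k * x k) := by ring
          _ = aa lam (k+1) * x (k+1) := by rw [hvw]; ring
          _ = x (k+1) * ((ww lam (k+1))⁻¹ * ww lam (k+1)) * aa lam (k+1) := by rw [hv2]; ring
          _ = x (k+1) * (ww lam (k+1))⁻¹ * (ww lam (k+1) * aa lam (k+1)) := by ring
  have hRA : R * A = 1 := by
    refine ContinuousLinearMap.ext fun x => ZeroAtInftyContinuousMap.ext fun n => ?_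
    have hRAx : (R * A) x n = R (A x) n := rfl
    have h1x : (1 : E →L[ℂ] E) x n = x n := rfl
    rw [hRAx, h1x, hR_apply]
    simp only [hRf]
    rw [htel x n]
    rw [mul_comm (x n) _, ← mul_assoc, mul_inv_cancel₀ (hwne n), one_mul]
  exact ⟨⟨A, R, hAR, hRA⟩, rfl⟩

end Stmt17

end

set_option maxHeartbeats 2000000 in
open Stmt17 in
/-- With `r = (1-i, -i, -3/2, -i)` and `s = (i, 1+i, -2, -3/2, 1-i, -1)`, the
spectrum of `B(r₁,…,r₄; s₁,…,s₆)` on `c₀` equals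
`{λ : |λ-(1-i)| · |λ+i|² · |λ+3/2| ≤ 6^{2/3}}`. -/
theorem stmt_17
    (B : ZeroAtInftyContinuousMap ℕ ℂ →L[ℂ] ZeroAtInftyContinuousMap ℕ ℂ)
    (hB0 : ∀ x : ZeroAtInftyContinuousMap ℕ ℂ,
      B x 0 = (![1 - I, -I, -(3/2), -I] : Fin 4 → ℂ) 0 * x 0)
    (hB : ∀ (x : ZeroAtInftyContinuousMap ℕ ℂ) (k : ℕ),
      B x (k + 1) = (![I, 1 + I, -2, -(3/2), 1 - I, -1] : Fin 6 → ℂ) (↑k) * x k +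
        (![1 - I, -I, -(3/2), -I] : Fin 4 → ℂ) (↑(k + 1)) * x (k + 1)) :
    spectrum ℂ B = {lam : ℂ | ‖lam - (1 - I)‖ * ‖lam + I‖ ^ 2 *
      ‖lam + 3/2‖ ≤ (6 : ℝ) ^ ((2 : ℝ) / 3)} := by
  ext lam
  simp only [Set.mem_setOf_eq]
  have hPeq : ‖lam - (1 - I)‖ * ‖lam + I‖ ^ 2 * ‖lam + 3/2‖
      = Complex.abs (Stmt17.p lam) := by
    show _ = ‖Stmt17.p lam‖
    rw [Stmt17.p, norm_mul, norm_mul, norm_pow]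
  set A : ZeroAtInftyContinuousMap ℕ ℂ →L[ℂ] ZeroAtInftyContinuousMap ℕ ℂ :=
    @algebraMap ℂ (ZeroAtInftyContinuousMap ℕ ℂ →L[ℂ] ZeroAtInftyContinuousMap ℕ ℂ) _ _
      ContinuousLinearMap.algebra lam - B with hAdef
  have hcoord : ∀ (x : ZeroAtInftyContinuousMap ℕ ℂ) (k : ℕ), (A x) k = lam * x k - B x k := by
    intro x k
    rw [hAdef]
    simp [Algebra.algebraMap_eq_smul_one, ContinuousLinearMap.sub_apply,
      ContinuousLinearMap.smul_apply]
  have hA0 : ∀ x, (A x) 0 = Stmt17.aa lam 0 * x 0 := by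
    intro x
    rw [hcoord, hB0 x]
    have h0 : Stmt17.dd 0 = (![1 - I, -I, -(3/2), -I] : Fin 4 → ℂ) 0 := rfl
    rw [Stmt17.aa, ← h0]
    ring
  have hA' : ∀ x k, (A x) (k+1) = Stmt17.aa lam (k+1) * x (k+1) - Stmt17.ss k * x k := by
    intro x k
    rw [hcoord, hB x k]
    have h1 : Stmt17.dd (k+1) = (![1 - I, -I, -(3/2), -I] : Fin 4 → ℂ) (↑(k+1)) := rfl
    have h2 : Stmt17.ss k = (![I, 1 + I, -2, -(3/2), 1 - I, -1] : Fin 6 → ℂ) (↑k) := rfl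
    rw [Stmt17.aa, ← h1, ← h2]
    ring
  have hc3 : ((6:ℝ) ^ ((2:ℝ)/3))^(3:ℕ) = 36 := by
    rw [← Real.rpow_natCast ((6:ℝ) ^ ((2:ℝ)/3)) 3, ← Real.rpow_mul (by norm_num : (0:ℝ) ≤ 6)]
    norm_num
  constructor
  · intro hs
    by_contra hnot
    push_neg at hnot
    rw [hPeq] at hnot
    have hgt : 36 < (Complex.abs (Stmt17.p lam))^3 := by
      rw [← hc3]
      exact pow_lt_pow_left₀ hnot (Real.rpow_nonneg (by norm_num) _) (by norm_num)
    exact (spectrum.notMem_iff.mpr (Stmt17.isUnitA A hA0 hA' hgt)) hs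
  · intro hle
    rw [hPeq] at hle
    have hle3 : (Complex.abs (Stmt17.p lam))^3 ≤ 36 := by
      rw [← hc3]
      exact pow_le_pow_left₀ (AbsoluteValue.nonneg _ _) hle 3
    by_contra hs
    rw [spectrum.notMem_iff] at hs
    exact Stmt17.not_isUnit A hA0 hA' hle3 hs
end
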